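/- arXiv:1412.0231 — 7 statements merged into one kernel-verified Lean document; each statement's English description precedes it below -/
import Mathlib

section
/- Let (d_k, ..., d_0) be an (n,b)-palintiple that is symmetric or shifted-symmetric, and let ξ ∈ ℂ with ξ ≠ 0, ξ ≠ b, and Pal(ξ) = 0, where Pal(X) = Σ_{j=0}^{k} (d_j − n·d_{k−j})·X^j is its palinomial. Then ξ is a root of both the digit polynomial and the reverse-digit polynomial: Σ_{j=0}^{k} d_j·ξ^j = 0 and Σ_{j=0}^{k} d_{k−j}·ξ^j = 0. -/
open Finset Polynomial

/-- `d 0, ..., d k` are the `k+1` digits (least significant first) of an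
`(n,b)`-palintiple. -/
def IsPalintiple (n b : ℤ) (k : ℕ) (d : ℕ → ℤ) : Prop :=
  1 < n ∧ n < b ∧ 1 ≤ k ∧
  (∀ j ≤ k, 0 ≤ d j ∧ d j ≤ b - 1) ∧ d k ≠ 0 ∧ d 0 ≠ 0 ∧
  (∑ j ∈ range (k + 1), d j * b ^ j) = n * ∑ j ∈ range (k + 1), d (k - j) * b ^ j

/-- `c 0, ..., c (k+1)` are the carries of the `(n,b)`-palintiple with digits
`d 0, ..., d k`. -/
def IsCarries (n b : ℤ) (k : ℕ) (d c : ℕ → ℤ) : Prop :=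
  c 0 = 0 ∧ ∀ j ≤ k, n * d (k - j) + c j = d j + b * c (j + 1)

/-- A palintiple with carries `c` is symmetric if `c j = c (k-j)`. -/
def IsSym (k : ℕ) (c : ℕ → ℤ) : Prop := ∀ j ≤ k, c j = c (k - j)

/-- A palintiple with carries `c` is shifted-symmetric if `c j = c (k-j+1)`. -/
def IsShiftedSym (k : ℕ) (c : ℕ → ℤ) : Prop := ∀ j ≤ k, c j = c (k - j + 1)

/-- A palintiple is asymmetric if it is neither symmetric nor shifted-symmetric. -/
def IsAsym (k : ℕ) (c : ℕ → ℤ) : Prop := ¬ IsSym k c ∧ ¬ IsShiftedSym k c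

/-- **Theorem.** A nonzero root `ξ ≠ b` of the palinomial of a symmetric or
shifted-symmetric palintiple is a common root of the digit and reverse-digit
polynomials. -/
theorem palinomial_root_is_digit_root (n b : ℤ) (k : ℕ) (d c : ℕ → ℤ)
    (hp : IsPalintiple n b k d) (hc : IsCarries n b k d c)
    (hsym : IsSym k c ∨ IsShiftedSym k c)
    (ξ : ℂ) (hξ0 : ξ ≠ 0) (hξb : ξ ≠ (b : ℂ))
    (hroot : ∑ j ∈ range (k + 1), ((d j : ℂ) - (n : ℂ) * (d (k - j) : ℂ)) * ξ ^ j = 0) :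
    (∑ j ∈ range (k + 1), (d j : ℂ) * ξ ^ j = 0) ∧
    (∑ j ∈ range (k + 1), (d (k - j) : ℂ) * ξ ^ j = 0) := by
  obtain ⟨hn, hnb, hk, hdig, hdk, hd0, hsum⟩ := hp
  obtain ⟨hc0, hrec⟩ := hc
  -- Step 1: c (k+1) = 0
  have hck1 : c (k + 1) = 0 := by
    have htel : ∑ j ∈ range (k + 1), (c (j + 1) * b ^ (j + 1) - c j * b ^ j)
        = c (k + 1) * b ^ (k + 1) - c 0 * b ^ 0 :=
      Finset.sum_range_sub (fun j => c j * b ^ j) (k + 1)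
    have hterm : ∀ j ∈ range (k + 1),
        c (j + 1) * b ^ (j + 1) - c j * b ^ j
          = n * (d (k - j) * b ^ j) - d j * b ^ j := by
      intro j hj
      have h := hrec j (Nat.lt_succ_iff.mp (mem_range.mp hj))
      linear_combination -(b : ℤ) ^ j * h
    rw [Finset.sum_congr rfl hterm, Finset.sum_sub_distrib, ← Finset.mul_sum,
      ← hsum, sub_self] at htel
    have hb0 : (b : ℤ) ^ (k + 1) ≠ 0 := pow_ne_zero _ (by omega)
    have : c (k + 1) * b ^ (k + 1) = 0 := by
      have := htel.symm
      rw [hc0] at this; linarith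
    rcases mul_eq_zero.mp this with h | h
    · exact h
    · exact absurd h hb0
  set S : ℂ := ∑ j ∈ range (k + 1), (c j : ℂ) * ξ ^ j with hSdef
  -- Shift identity
  have hshift : ∑ j ∈ range (k + 1), (c (j + 1) : ℂ) * ξ ^ (j + 1) = S := by
    have h2 : ∑ j ∈ range (k + 2), (c j : ℂ) * ξ ^ j = S := by
      rw [Finset.sum_range_succ, hck1]; simp; rfl
    have h3 : ∑ j ∈ range (k + 2), (c j : ℂ) * ξ ^ j
        = (∑ j ∈ range (k + 1), (c (j + 1) : ℂ) * ξ ^ (j + 1)) + (c 0 : ℂ) * ξ ^ 0 :=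
      Finset.sum_range_succ' _ _
    rw [h2, hc0] at h3; simpa using h3.symm
  -- Pal in terms of carries
  have hPal : ∑ j ∈ range (k + 1), ((c j : ℂ) - (b : ℂ) * (c (j + 1) : ℂ)) * ξ ^ j = 0 := by
    rw [← hroot]
    refine Finset.sum_congr rfl fun j hj => ?_
    have h := hrec j (Nat.lt_succ_iff.mp (mem_range.mp hj))
    have h' : (d j : ℂ) - (n : ℂ) * (d (k - j) : ℂ) = (c j : ℂ) - (b : ℂ) * (c (j + 1) : ℂ) := by
      have := congrArg (Int.cast : ℤ → ℂ) h
      push_cast at this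
      linear_combination -this
    rw [h']
  -- S = 0
  have hS : S = 0 := by
    have e1 : ξ * ∑ j ∈ range (k + 1), ((c j : ℂ) - (b : ℂ) * (c (j + 1) : ℂ)) * ξ ^ j
        = (∑ j ∈ range (k + 1), (c j : ℂ) * ξ ^ (j + 1))
          - (b : ℂ) * ∑ j ∈ range (k + 1), (c (j + 1) : ℂ) * ξ ^ (j + 1) := by
      rw [Finset.mul_sum, Finset.mul_sum, ← Finset.sum_sub_distrib]
      exact Finset.sum_congr rfl fun j _ => by ring
    have e2 : ∑ j ∈ range (k + 1), (c j : ℂ) * ξ ^ (j + 1) = ξ * S := by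
      rw [Finset.mul_sum]
      exact Finset.sum_congr rfl fun j _ => by ring
    rw [hPal, mul_zero, e2, hshift] at e1
    have h0 : (ξ - (b : ℂ)) * S = 0 := by linear_combination -e1
    rcases mul_eq_zero.mp h0 with h | h
    · exact absurd (sub_eq_zero.mp h) hξb
    · exact h
  -- c k = 0 helper facts per symmetry case, prove T1 = T2 = 0
  have hT1T2 : (∑ j ∈ range (k + 1), (c (k - j) : ℂ) * ξ ^ j = 0)
      ∧ (∑ j ∈ range (k + 1), (c (k - j + 1) : ℂ) * ξ ^ j = 0) := by
    rcases hsym with hs | hs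
    · constructor
      · rw [← hS]
        exact Finset.sum_congr rfl fun j hj =>
          by rw [← hs j (Nat.lt_succ_iff.mp (mem_range.mp hj))]
      · have hck : c k = 0 := by
          have := hs k le_rfl; rw [Nat.sub_self] at this; rw [this, hc0]
        have h4 : ∑ j ∈ range (k + 1), (c (k - j + 1) : ℂ) * ξ ^ j
            = (∑ j ∈ range k, (c (k - (j + 1) + 1) : ℂ) * ξ ^ (j + 1))
              + (c (k - 0 + 1) : ℂ) * ξ ^ 0 := Finset.sum_range_succ' _ _
        rw [h4]
        have : ∀ j ∈ range k, (c (k - (j + 1) + 1) : ℂ) * ξ ^ (j + 1)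
            = (c j : ℂ) * ξ ^ (j + 1) := by
          intro j hj
          have hjk : j < k := mem_range.mp hj
          have : k - (j + 1) + 1 = k - j := by omega
          rw [this, ← hs j hjk.le]
        rw [Finset.sum_congr rfl this]
        simp only [Nat.sub_zero, hck1, Int.cast_zero, zero_mul, add_zero]
        have hsk : ∑ j ∈ range k, (c j : ℂ) * ξ ^ (j + 1)
            = ξ * ∑ j ∈ range k, (c j : ℂ) * ξ ^ j := by
          rw [Finset.mul_sum]; exact Finset.sum_congr rfl fun j _ => by ring
        have hSk : ∑ j ∈ range k, (c j : ℂ) * ξ ^ j = 0 := by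
          have := Finset.sum_range_succ (fun j => (c j : ℂ) * ξ ^ j) k
          rw [← hSdef] at this
          rw [hS, hck] at this
          simpa using this.symm
        rw [hsk, hSk, mul_zero]
    · constructor
      · have hT1 : ∑ j ∈ range (k + 1), (c (k - j) : ℂ) * ξ ^ j
            = ∑ j ∈ range (k + 1), (c (j + 1) : ℂ) * ξ ^ j := by
          refine Finset.sum_congr rfl fun j hj => ?_
          have hjk : j ≤ k := Nat.lt_succ_iff.mp (mem_range.mp hj)
          have h5 := hs (k - j) (Nat.sub_le k j)
          have : k - (k - j) + 1 = j + 1 := by omega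
          rw [this] at h5
          rw [h5]
        rw [hT1]
        have hmul : ξ * ∑ j ∈ range (k + 1), (c (j + 1) : ℂ) * ξ ^ j = 0 := by
          rw [Finset.mul_sum]
          have : ∀ j ∈ range (k + 1), ξ * ((c (j + 1) : ℂ) * ξ ^ j)
              = (c (j + 1) : ℂ) * ξ ^ (j + 1) := fun j _ => by ring
          rw [Finset.sum_congr rfl this, hshift, hS]
        rcases mul_eq_zero.mp hmul with h | h
        · exact absurd h hξ0
        · exact h
      · rw [← hS]
        exact Finset.sum_congr rfl fun j hj =>
          by rw [← hs j (Nat.lt_succ_iff.mp (mem_range.mp hj))]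
  obtain ⟨hT1, hT2⟩ := hT1T2
  -- Reversed palinomial vanishes
  have hRev : ∑ j ∈ range (k + 1), ((d (k - j) : ℂ) - (n : ℂ) * (d j : ℂ)) * ξ ^ j = 0 := by
    have hterm : ∀ j ∈ range (k + 1),
        ((d (k - j) : ℂ) - (n : ℂ) * (d j : ℂ)) * ξ ^ j
          = ((c (k - j) : ℂ) - (b : ℂ) * (c (k - j + 1) : ℂ)) * ξ ^ j := by
      intro j hj
      have hjk : j ≤ k := Nat.lt_succ_iff.mp (mem_range.mp hj)
      have h := hrec (k - j) (Nat.sub_le k j)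
      have hkk : k - (k - j) = j := by omega
      rw [hkk] at h
      have := congrArg (Int.cast : ℤ → ℂ) h
      push_cast at this
      have h' : (d (k - j) : ℂ) - (n : ℂ) * (d j : ℂ)
          = (c (k - j) : ℂ) - (b : ℂ) * (c (k - j + 1) : ℂ) := by linear_combination -this
      rw [h']
    rw [Finset.sum_congr rfl hterm]
    have : ∑ j ∈ range (k + 1), ((c (k - j) : ℂ) - (b : ℂ) * (c (k - j + 1) : ℂ)) * ξ ^ j
        = (∑ j ∈ range (k + 1), (c (k - j) : ℂ) * ξ ^ j)
          - (b : ℂ) * ∑ j ∈ range (k + 1), (c (k - j + 1) : ℂ) * ξ ^ j := by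
      rw [Finset.mul_sum, ← Finset.sum_sub_distrib]
      exact Finset.sum_congr rfl fun j _ => by ring
    rw [this, hT1, hT2, mul_zero, sub_zero]
  -- Combine
  set D : ℂ := ∑ j ∈ range (k + 1), (d j : ℂ) * ξ ^ j with hD
  set R : ℂ := ∑ j ∈ range (k + 1), (d (k - j) : ℂ) * ξ ^ j with hR
  have h1 : D - (n : ℂ) * R = 0 := by
    rw [← hroot, hD, hR, Finset.mul_sum, ← Finset.sum_sub_distrib]
    exact Finset.sum_congr rfl fun j _ => by ring
  have h2 : R - (n : ℂ) * D = 0 := by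
    rw [← hRev, hD, hR, Finset.mul_sum, ← Finset.sum_sub_distrib]
    exact Finset.sum_congr rfl fun j _ => by ring
  have hn2 : (1 : ℂ) - (n : ℂ) ^ 2 ≠ 0 := by
    intro h
    have h' : ((1 - n ^ 2 : ℤ) : ℂ) = 0 := by push_cast; linear_combination h
    have : (1 - n ^ 2 : ℤ) = 0 := by exact_mod_cast h'
    nlinarith
  have hD0 : D = 0 := by
    have : ((1 : ℂ) - (n : ℂ) ^ 2) * D = 0 := by linear_combination h1 + (n : ℂ) * h2
    rcases mul_eq_zero.mp this with h | h
    · exact absurd h hn2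
    · exact h
  have hR0 : R = 0 := by
    have := h2; rw [hD0, mul_zero, sub_zero] at this; exact this
  exact ⟨hD0, hR0⟩
end

section
/- Let (d_k, ..., d_0) be a 1089 (n,b)-palintiple (a symmetric (n,b)-palintiple with n+1 dividing b). Then its digit polynomial D(X) = Σ_{j=0}^{k} d_j·X^j and its reverse-digit polynomial R(X) = Σ_{j=0}^{k} d_{k−j}·X^j each have at least one root on the complex unit circle: there exist z, w ∈ ℂ with |z| = |w| = 1, D(z) = 0, and R(w) = 0. -/
open Finset Polynomial

namespace PalinAux1089

lemma sum_cos_eq (M : ℕ) (hM : 0 < M) (a : ℤ) (ha : a.natAbs < M) :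
    ∑ t ∈ range M, Real.cos (2 * Real.pi * (a : ℝ) * t / M) =
      if a = 0 then (M : ℝ) else 0 := by
  by_cases h0 : a = 0
  · simp [h0]
  · rw [if_neg h0]
    set x : ℝ := 2 * Real.pi * (a : ℝ) / M with hx
    set ζ : ℂ := Complex.exp ((x : ℂ) * Complex.I) with hζ
    have hMne : (M : ℝ) ≠ 0 := Nat.cast_ne_zero.mpr hM.ne'
    have hζpow : ∀ t : ℕ, ζ ^ t = Complex.exp (((x * t : ℝ) : ℂ) * Complex.I) := by
      intro t
      rw [hζ, ← Complex.exp_nat_mul]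
      congr 1
      push_cast
      ring
    have hζM : ζ ^ M = 1 := by
      rw [hζpow M]
      have : (x * M : ℝ) = 2 * Real.pi * a := by
        rw [hx]; field_simp
      rw [this]
      have := Complex.exp_int_mul_two_pi_mul_I a
      rw [← this]
      congr 1
      push_cast
      ring
    have hζne : ζ ≠ 1 := by
      rw [hζ]
      simp only [ne_eq, Complex.exp_eq_one_iff, not_exists]
      intro m hm
      have hI : (x : ℂ) = m * (2 * Real.pi) := by
        apply mul_right_cancel₀ Complex.I_ne_zero
        rw [hm]; ring
      have hxr : x = m * (2 * Real.pi) := by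
        exact_mod_cast hI
      have hπ : (0:ℝ) < Real.pi := Real.pi_pos
      rw [hx] at hxr
      have haM : (a : ℝ) = m * M := by
        field_simp at hxr
        nlinarith [hxr]
      have haM' : a = m * M := by exact_mod_cast haM
      rcases eq_or_ne m 0 with h | h
      · exact h0 (by simp [haM', h])
      · have : (M : ℤ) ≤ |a| := by
          rw [haM', abs_mul]
          have : (1:ℤ) ≤ |m| := Int.one_le_abs (by exact_mod_cast h)
          have hMa : |(M:ℤ)| = M := abs_of_nonneg (by positivity)
          nlinarith [abs_nonneg (m:ℤ), hMa]
        have : (M:ℤ) ≤ a.natAbs := by rwa [Int.abs_eq_natAbs] at this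
        omega
    have hgeom : ∑ t ∈ range M, ζ ^ t = 0 := by
      rw [geom_sum_eq hζne, hζM]
      simp
    have hre : ∀ t ∈ range M, Real.cos (2 * Real.pi * (a:ℝ) * t / M) = (ζ ^ t).re := by
      intro t _
      rw [hζpow t]
      rw [Complex.exp_ofReal_mul_I_re]
      congr 1
      rw [hx]; ring
    calc ∑ t ∈ range M, Real.cos (2 * Real.pi * (a:ℝ) * t / M)
        = ∑ t ∈ range M, (ζ ^ t).re := Finset.sum_congr rfl hre
      _ = (∑ t ∈ range M, ζ ^ t).re := by rw [Complex.re_sum]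
      _ = 0 := by rw [hgeom]; simp


lemma dvd_carries (n q : ℤ) (k : ℕ) (d c : ℕ → ℤ) (hn : 1 < n)
    (hstarq : ∀ j, 1 ≤ j → j ≤ k → (n - 1) * d j = q * c (j+1) + n * q * c (j-1) - c j)
    (hd0q : (n - 1) * d 0 = q * c 1)
    (hc0 : c 0 = 0) (hck1 : c (k+1) = 0) :
    ∀ s : ℕ, (s : ℤ) ∣ (n - 1) → ∀ j, j ≤ k + 1 → (s : ℤ) ∣ c j := by
  intro s
  induction s using Nat.strong_induction_on with
  | _ s ih =>
    intro hs j hj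
    rcases Nat.eq_zero_or_pos s with h0 | h0
    · subst h0
      simp only [Nat.cast_zero, zero_dvd_iff] at hs
      omega
    rcases eq_or_ne s 1 with h1 | h1
    · subst h1; simp
    obtain ⟨p, hp, hpdvd⟩ := Nat.exists_prime_and_dvd h1
    obtain ⟨t, hst⟩ := hpdvd
    have hp2 : 2 ≤ p := hp.two_le
    have ht0 : 0 < t := by
      rcases Nat.eq_zero_or_pos t with h | h
      · subst h; rw [Nat.mul_zero] at hst; omega
      · exact h
    have htlt : t < s := by
      have : 2 * t ≤ p * t := Nat.mul_le_mul_right t hp2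
      omega
    have htdvd : (t : ℤ) ∣ (n - 1) :=
      dvd_trans (by exact_mod_cast Dvd.intro_left p hst.symm) hs
    have IH : ∀ j, j ≤ k + 1 → (t : ℤ) ∣ c j := ih t htlt htdvd
    set g : ℕ → ℤ := fun j => c j / t with hgdef
    have htz : (t : ℤ) ≠ 0 := by exact_mod_cast ht0.ne'
    have hg : ∀ j, j ≤ k + 1 → c j = t * g j := fun j hj =>
      (Int.mul_ediv_cancel' (IH j hj)).symm
    have hg0 : g 0 = 0 := by simp [hgdef, hc0]
    have hgk1 : g (k+1) = 0 := by simp [hgdef, hck1]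
    suffices hgoal : (p : ℤ) ∣ g j by
      rw [hg j hj, hst]
      push_cast
      rw [mul_comm (p : ℤ) (t : ℤ)]
      exact mul_dvd_mul_left (t : ℤ) hgoal
    -- key relations for g
    have key : ∀ i, 1 ≤ i → i ≤ k → (p : ℤ) ∣ q * g (i+1) + n * q * g (i-1) - g i := by
      intro i h1 h2
      have h := hstarq i h1 h2
      have hsdvd : ((p * t : ℕ) : ℤ) ∣ (n - 1) * d i := by
        rw [← hst]; exact hs.mul_right (d i)
      rw [h, hg (i+1) (by omega), hg (i-1) (by omega), hg i (by omega)] at hsdvd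
      push_cast at hsdvd
      have h2' : (t : ℤ) * ((p : ℤ) * 1) ∣ (t : ℤ) * (q * g (i+1) + n * q * g (i-1) - g i) := by
        have : (p : ℤ) * (t : ℤ) ∣ (t : ℤ) * (q * g (i+1) + n * q * g (i-1) - g i) := by
          convert hsdvd using 1; ring
        rw [mul_one]
        rwa [mul_comm ((p:ℤ)) ((t:ℤ))] at this
      have := (mul_dvd_mul_iff_left htz).mp h2'
      rwa [mul_one] at this
    have key1 : (p : ℤ) ∣ q * g 1 := by
      have hsdvd : ((p * t : ℕ) : ℤ) ∣ (n - 1) * d 0 := by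
        rw [← hst]; exact hs.mul_right (d 0)
      rw [hd0q, hg 1 (by omega)] at hsdvd
      push_cast at hsdvd
      have h2' : (t : ℤ) * ((p : ℤ) * 1) ∣ (t : ℤ) * (q * g 1) := by
        rw [mul_one]
        have : (p : ℤ) * (t : ℤ) ∣ (t : ℤ) * (q * g 1) := by
          convert hsdvd using 1; ring
        rwa [mul_comm ((p:ℤ)) ((t:ℤ))] at this
      have := (mul_dvd_mul_iff_left htz).mp h2'
      rwa [mul_one] at this
    by_cases hpq : (p : ℤ) ∣ q
    · -- p divides q : then p ∣ g i directly for 1 ≤ i ≤ k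
      rcases Nat.eq_zero_or_pos j with hj0 | hj1
      · subst hj0; rw [hg0]; exact dvd_zero _
      rcases eq_or_ne j (k+1) with hjk | hjk
      · rw [hjk, hgk1]; exact dvd_zero _
      have hjle : j ≤ k := by omega
      have h := key j hj1 hjle
      have h1 : (p : ℤ) ∣ q * g (j+1) := hpq.mul_right _
      have h2 : (p : ℤ) ∣ n * q * g (j-1) := (hpq.mul_left n).mul_right _
      have : (p:ℤ) ∣ (q * g (j+1) + n * q * g (j-1)) - (q * g (j+1) + n * q * g (j-1) - g j) :=
        dvd_sub (dvd_add h1 h2) h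
      simpa using this
    · have hp' : Prime (p : ℤ) := Nat.prime_iff_prime_int.mp hp
      have hpg1 : (p : ℤ) ∣ g 1 := (hp'.dvd_mul.mp key1).resolve_left hpq
      have main : ∀ i, i ≤ k → (p : ℤ) ∣ g i ∧ (p : ℤ) ∣ g (i+1) := by
        intro i
        induction i with
        | zero => exact fun _ => ⟨hg0 ▸ dvd_zero _, hpg1⟩
        | succ i ihh =>
          intro hik
          obtain ⟨ha, hb⟩ := ihh (by omega)
          refine ⟨hb, ?_⟩
          have hk := key (i+1) (by omega) (by omega)
          have heq : q * g (i+2) =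
              (q * g (i+1+1) + n * q * g (i+1-1) - g (i+1)) + g (i+1) - n * q * g i := by
            simp only [Nat.add_sub_cancel]
            ring
          have hdvd2 : (p : ℤ) ∣ q * g (i+2) := by
            rw [heq]
            exact (hk.add hb).sub (ha.mul_left (n*q))
          exact (hp'.dvd_mul.mp hdvd2).resolve_left hpq
      rcases eq_or_ne j (k+1) with hjk | hjk
      · rw [hjk]; exact (main k le_rfl).2
      · exact (main j (by omega)).1


end PalinAux1089

/-- **Corollary.** Digit and reverse-digit polynomials of a 1089 palintiple each have
at least one root on the unit circle. -/
theorem digit_polys_root_on_unit_circle (n b : ℤ) (k : ℕ) (d c : ℕ → ℤ)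
    (hp : IsPalintiple n b k d) (hc : IsCarries n b k d c)
    (hsym : IsSym k c) (hdvd : n + 1 ∣ b) :
    (∃ z : ℂ, ‖z‖ = 1 ∧ ∑ j ∈ range (k + 1), (d j : ℂ) * z ^ j = 0) ∧
    (∃ w : ℂ, ‖w‖ = 1 ∧ ∑ j ∈ range (k + 1), (d (k - j) : ℂ) * w ^ j = 0) := by
  obtain ⟨hn, hnb, hk, hd, hdk, hd0, heq⟩ := hp
  obtain ⟨hc0, hrec⟩ := hc
  obtain ⟨q, hq⟩ := hdvd
  replace hsym : ∀ j ≤ k, c j = c (k - j) := hsym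
  have hb0 : 0 < b := by omega
  have hq1 : 1 ≤ q := by nlinarith
  -- c (k+1) = 0
  have hsum : n * ∑ j ∈ range (k+1), d (k-j) * b^j
      = ∑ j ∈ range (k+1), (d j * b^j + c (j+1) * b^(j+1) - c j * b^j) := by
    rw [Finset.mul_sum]
    refine sum_congr rfl ?_
    intro j hj
    have h := hrec j (Nat.lt_succ_iff.mp (mem_range.mp hj))
    have : n * d (k-j) = d j + b * c (j+1) - c j := by linarith
    rw [show n * (d (k-j) * b^j) = (n * d (k-j)) * b^j from by ring, this]
    ring
  have e1 : ∑ j ∈ range (k+1), (d j * b^j + c (j+1) * b^(j+1) - c j * b^j)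
      = (∑ j ∈ range (k+1), d j * b^j) + (∑ j ∈ range (k+1), c (j+1) * b^(j+1))
        - ∑ j ∈ range (k+1), c j * b^j := by
    rw [Finset.sum_sub_distrib, Finset.sum_add_distrib]
  have h2 := Finset.sum_range_succ (fun j => c j * b^j) (k+1)
  have h3 := Finset.sum_range_succ' (fun j => c j * b^j) (k+1)
  have hck1 : c (k+1) = 0 := by
    have hbpow : (0:ℤ) < b^(k+1) := pow_pos hb0 _
    have hzero : c (k+1) * b^(k+1) = 0 := by
      rw [hc0] at h3
      simp only [zero_mul, add_zero, pow_zero, mul_one] at h3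
      linarith [heq, hsum, e1, h2, h3]
    rcases mul_eq_zero.mp hzero with h | h
    · exact h
    · omega
  -- carry bounds
  have hcb : ∀ j, j ≤ k + 1 → 0 ≤ c j ∧ c j ≤ n - 1 := by
    intro j
    induction j with
    | zero => intro _; rw [hc0]; omega
    | succ i ihi =>
      intro h
      have hik : i ≤ k := by omega
      have h1 := hrec i hik
      have h2 := hd i hik
      have h3 := hd (k - i) (by omega)
      have h4 := ihi (by omega)
      constructor
      · by_contra hcon
        push_neg at hcon
        have hprod : b * c (i+1) ≤ b * (-1) := mul_le_mul_of_nonneg_left (by omega) (by omega)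
        have hnd : 0 ≤ n * d (k-i) := mul_nonneg (by omega) h3.1
        linarith
      · by_contra hcon
        push_neg at hcon
        have hprod : b * n ≤ b * c (i+1) := mul_le_mul_of_nonneg_left (by omega) (by omega)
        have hnd : n * d (k-i) ≤ n * (b-1) := mul_le_mul_of_nonneg_left h3.2 (by omega)
        linarith
  have hck : c k = 0 := by
    have h := hsym 0 (Nat.zero_le k)
    rw [hc0, Nat.sub_zero] at h
    exact h.symm
  have hrev : ∀ j, 1 ≤ j → j ≤ k → n * d j + c j = d (k - j) + b * c (j - 1) := by
    intro j h1 h2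
    have h := hrec (k - j) (by omega)
    rw [Nat.sub_sub_self h2] at h
    have hs1 : c (k - j) = c j := (hsym j h2).symm
    have hs2 : c (k - j + 1) = c (j - 1) := by
      have h3 := hsym (k - j + 1) (by omega)
      rw [show k - (k - j + 1) = j - 1 by omega] at h3
      exact h3
    rw [hs1, hs2] at h
    exact h
  have hndk : d k = n * d 0 := by
    have h := hrec k le_rfl
    rw [Nat.sub_self, hck, hck1] at h
    linarith
  have hstarq : ∀ j, 1 ≤ j → j ≤ k → (n - 1) * d j = q * c (j+1) + n * q * c (j-1) - c j := by
    intro j h1 h2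
    have A := hrec j h2
    have B := hrev j h1 h2
    have hcomb : (n*n - 1) * d j = b * (c (j+1) + n * c (j-1)) - (n+1) * c j := by
      linear_combination A + n * B
    have h2' : (n+1) * ((n-1) * d j) = (n+1) * (q * c (j+1) + n * q * c (j-1) - c j) := by
      rw [hq] at hcomb
      linear_combination hcomb
    exact mul_left_cancel₀ (by omega : (n+1:ℤ) ≠ 0) h2'
  have hd0q : (n - 1) * d 0 = q * c 1 := by
    have h := hrec 0 (Nat.zero_le k)
    rw [Nat.sub_zero, hc0, hndk] at h
    have h2' : (n+1) * ((n-1) * d 0) = (n+1) * (q * c 1) := by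
      rw [hq] at h
      linear_combination h
    exact mul_left_cancel₀ (by omega : (n+1:ℤ) ≠ 0) h2'
  have hc1pos : 0 < c 1 := by
    by_contra hcon
    push_neg at hcon
    have h01 := hd 0 (Nat.zero_le k)
    have hqc : q * c 1 ≤ 0 := mul_nonpos_of_nonneg_of_nonpos (by omega) hcon
    have hd01 : 1 ≤ d 0 := by
      rcases h01.1.lt_or_eq with h | h
      · omega
      · exact absurd h.symm hd0
    have : (n-1) * 1 ≤ (n-1) * d 0 := mul_le_mul_of_nonneg_left hd01 (by omega)
    linarith

  -- divisibility of carries by n - 1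
  have hdvdall : ∀ j, j ≤ k + 1 → (n - 1) ∣ c j := by
    have hcast : (((n-1).toNat : ℤ)) = n - 1 := Int.toNat_of_nonneg (by omega)
    intro j hj
    have h := PalinAux1089.dvd_carries n q k d c hn hstarq hd0q hc0 hck1
      (n-1).toNat (by rw [hcast]) j hj
    rwa [hcast] at h
  have hdich : ∀ j, j ≤ k + 1 → c j = 0 ∨ c j = n - 1 := by
    intro j hj
    rcases eq_or_ne (c j) 0 with h | h
    · exact Or.inl h
    · right
      have h1 := hcb j hj
      have h2 := Int.le_of_dvd (lt_of_le_of_ne h1.1 (Ne.symm h)) (hdvdall j hj)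
      omega
  have hCshift : ∀ z : ℂ, ∑ j ∈ range (k+1), (c (j+1) : ℂ) * z^(j+1)
      = ∑ j ∈ range (k+1), (c j : ℂ) * z^j := by
    intro z
    have h2 : ∑ j ∈ range (k+2), (c j : ℂ) * z^j
        = (∑ j ∈ range (k+1), (c j:ℂ) * z^j) + (c (k+1):ℂ) * z^(k+1) :=
      Finset.sum_range_succ _ _
    have h3 : ∑ j ∈ range (k+2), (c j : ℂ) * z^j
        = (∑ j ∈ range (k+1), (c (j+1):ℂ) * z^(j+1)) + (c 0:ℂ) * z^0 :=
      Finset.sum_range_succ' _ _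
    rw [hck1] at h2
    rw [hc0] at h3
    push_cast at h2 h3
    linear_combination h2 - h3
  have hI1 : ∀ z : ℂ,
      z * ((∑ j ∈ range (k+1), (d j:ℂ) * z^j) - n * ∑ j ∈ range (k+1), (d (k-j):ℂ) * z^j)
      = (z - b) * ∑ j ∈ range (k+1), (c j:ℂ) * z^j := by
    intro z
    have hterm : ∀ j ∈ range (k+1), ((d j : ℂ) - n * d (k-j)) * z^(j+1)
        = (c j : ℂ) * z^(j+1) - b * ((c (j+1):ℂ) * z^(j+1)) := by
      intro j hj
      have h := hrec j (Nat.lt_succ_iff.mp (mem_range.mp hj))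
      have hC : ((n:ℂ) * d (k-j) + c j) = ((d j:ℂ) + b * c (j+1)) := by
        exact_mod_cast congrArg (Int.cast : ℤ → ℂ) h
      linear_combination (-(z^(j+1))) * hC
    calc z * ((∑ j ∈ range (k+1), (d j:ℂ) * z^j) - n * ∑ j ∈ range (k+1), (d (k-j):ℂ) * z^j)
        = ∑ j ∈ range (k+1), ((d j:ℂ) - n * d (k-j)) * z^(j+1) := by
          rw [mul_sub, Finset.mul_sum, Finset.mul_sum, Finset.mul_sum, ← Finset.sum_sub_distrib]
          exact sum_congr rfl (fun j _ => by ring)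
      _ = ∑ j ∈ range (k+1), ((c j:ℂ) * z^(j+1) - b * ((c (j+1):ℂ) * z^(j+1))) :=
          sum_congr rfl hterm
      _ = z * (∑ j ∈ range (k+1), (c j:ℂ) * z^j)
            - b * ∑ j ∈ range (k+1), (c (j+1):ℂ) * z^(j+1) := by
          rw [Finset.sum_sub_distrib, Finset.mul_sum, Finset.mul_sum]
          congr 1
          exact sum_congr rfl (fun j _ => by ring)
      _ = (z - b) * ∑ j ∈ range (k+1), (c j:ℂ) * z^j := by
          rw [hCshift z]; ring
  have hI2 : ∀ z : ℂ,
      (n:ℂ) * (∑ j ∈ range (k+1), (d j:ℂ) * z^j) - (∑ j ∈ range (k+1), (d (k-j):ℂ) * z^j)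
      = ((b:ℂ) * z - 1) * ∑ j ∈ range (k+1), (c j:ℂ) * z^j := by
    intro z
    have hL : (n:ℂ) * (∑ j ∈ range (k+1), (d j:ℂ) * z^j)
        - (∑ j ∈ range (k+1), (d (k-j):ℂ) * z^j)
        = ∑ j ∈ range (k+1), ((n:ℂ) * d j - d (k-j)) * z^j := by
      rw [Finset.mul_sum, ← Finset.sum_sub_distrib]
      exact sum_congr rfl (fun j _ => by ring)
    have h3 := Finset.sum_range_succ' (fun j => ((n:ℂ) * d j - (d (k-j):ℂ)) * z^j) k
    have hF0 : ((n:ℂ) * d 0 - (d (k-0):ℂ)) * z^0 = 0 := by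
      rw [Nat.sub_zero, hndk]
      push_cast
      ring
    have hterm : ∀ i ∈ range k, ((n:ℂ) * d (i+1) - (d (k-(i+1)):ℂ)) * z^(i+1)
        = (b:ℂ) * ((c i:ℂ) * z^i) * z - (c (i+1):ℂ) * z^(i+1) := by
      intro i hi
      have hik : i + 1 ≤ k := mem_range.mp hi
      have h := hrev (i+1) (by omega) hik
      rw [Nat.add_sub_cancel] at h
      have hC : ((n:ℂ) * d (i+1) + c (i+1)) = ((d (k-(i+1)):ℂ) + b * c i) := by
        exact_mod_cast congrArg (Int.cast : ℤ → ℂ) h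
      linear_combination (z^(i+1)) * hC
    have hS1 : ∑ i ∈ range k, (c i:ℂ) * z^i = ∑ j ∈ range (k+1), (c j:ℂ) * z^j := by
      rw [Finset.sum_range_succ, hck]
      push_cast
      ring
    have hS2 : ∑ i ∈ range k, (c (i+1):ℂ) * z^(i+1) = ∑ j ∈ range (k+1), (c j:ℂ) * z^j := by
      have h4 := Finset.sum_range_succ' (fun j => (c j:ℂ) * z^j) k
      rw [hc0] at h4
      push_cast at h4
      linear_combination -h4
    rw [hL, h3, hF0, add_zero]
    rw [Finset.sum_congr rfl hterm, Finset.sum_sub_distrib]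
    rw [hS2]
    have : ∑ i ∈ range k, (b:ℂ) * ((c i:ℂ) * z^i) * z
        = (b:ℂ) * z * ∑ i ∈ range k, (c i:ℂ) * z^i := by
      rw [Finset.mul_sum]
      exact sum_congr rfl (fun i _ => by ring)
    rw [this, hS1]
    ring
  have hroot : ∀ z : ℂ, z ≠ 0 → (∑ j ∈ range (k+1), (c j:ℂ) * z^j) = 0 →
      (∑ j ∈ range (k+1), (d j:ℂ) * z^j) = 0 ∧ (∑ j ∈ range (k+1), (d (k-j):ℂ) * z^j) = 0 := by
    intro z hz hzero
    have h1 := hI1 z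
    have h2 := hI2 z
    rw [hzero, mul_zero] at h1 h2
    have hDR : (∑ j ∈ range (k+1), (d j:ℂ) * z^j)
        - (n:ℂ) * (∑ j ∈ range (k+1), (d (k-j):ℂ) * z^j) = 0 := by
      rcases mul_eq_zero.mp h1 with h | h
      · exact absurd h hz
      · exact h
    have hnc : ((n:ℂ) * n - 1) ≠ 0 := by
      have : ((n*n - 1 : ℤ) : ℂ) ≠ 0 := by
        rw [Int.cast_ne_zero]
        nlinarith
      push_cast at this
      convert this using 1
    have hr0 : (∑ j ∈ range (k+1), (d (k-j):ℂ) * z^j) = 0 := by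
      have hmul : ((n:ℂ) * n - 1) * (∑ j ∈ range (k+1), (d (k-j):ℂ) * z^j) = 0 := by
        linear_combination h2 - (n:ℂ) * hDR
      exact (mul_eq_zero.mp hmul).resolve_left hnc
    have hd0' : (∑ j ∈ range (k+1), (d j:ℂ) * z^j) = 0 := by
      rw [hr0, mul_zero, sub_zero] at hDR
      exact hDR
    exact ⟨hd0', hr0⟩

  suffices h : ∃ z : ℂ, ‖z‖ = 1 ∧ (∑ j ∈ range (k+1), (c j:ℂ) * z^j) = 0 by
    obtain ⟨z, habs, hCz⟩ := h
    have hz0 : z ≠ 0 := by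
      intro h0
      rw [h0] at habs
      simp at habs
    obtain ⟨hD, hR⟩ := hroot z hz0 hCz
    exact ⟨⟨z, habs, hD⟩, ⟨z, habs, hR⟩⟩
  rcases Nat.even_or_odd k with hke | hko
  · -- even case
    obtain ⟨m, hkm⟩ := hke
    have hm1 : 1 ≤ m := by omega
    have hsym_m1 : c (m+1) = c (m-1) := by
      have h := hsym (m+1) (by omega)
      rw [show k - (m+1) = m - 1 by omega] at h
      exact h
    have hkey : c m ≤ c (m-1) := by
      rcases hdich m (by omega) with h | h
      · rw [h]; exact (hcb (m-1) (by omega)).1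
      · rcases hdich (m-1) (by omega) with h' | h'
        · exfalso
          have hs := hstarq m (by omega) (by omega)
          rw [hsym_m1, h', h] at hs
          have hdm := (hd m (by omega)).1
          have hge : 0 ≤ (n-1) * d m := mul_nonneg (by omega) hdm
          simp only [mul_zero, zero_add] at hs
          omega
        · rw [h, h']
    set M : ℕ := k + 2 with hMdef
    have hM4 : 4 ≤ M := by omega
    set f : ℝ → ℝ := fun θ => ∑ j ∈ range (k+1), (c j:ℝ) * Real.cos (((j:ℝ) - (m:ℝ)) * θ)
      with hfd
    have hfapp : ∀ θ : ℝ, f θ = ∑ j ∈ range (k+1), (c j:ℝ) * Real.cos (((j:ℝ) - (m:ℝ)) * θ) :=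
      fun θ => by rw [hfd]
    have hcont : Continuous f := by
      rw [hfd]
      apply continuous_finset_sum
      intro j _
      exact continuous_const.mul (Real.continuous_cos.comp (continuous_const.mul continuous_id))
    have hf0 : 0 < f 0 := by
      have hf0e : f 0 = ∑ j ∈ range (k+1), (c j:ℝ) := by
        rw [hfapp]
        refine sum_congr rfl ?_
        intro j _
        rw [mul_zero, Real.cos_zero, mul_one]
      rw [hf0e]
      have hle : (c 1:ℝ) ≤ ∑ j ∈ range (k+1), (c j:ℝ) := by
        apply Finset.single_le_sum (f := fun j => (c j:ℝ))
        · intro i hi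
          have := (hcb i (by
            have := mem_range.mp hi
            omega)).1
          exact_mod_cast this
        · exact mem_range.mpr (by omega)
      have hc1r : (0:ℝ) < c 1 := by exact_mod_cast hc1pos
      linarith
    have hsin0 : ∀ θ : ℝ, ∑ j ∈ range (k+1), (c j:ℝ) * Real.sin (((j:ℝ) - (m:ℝ)) * θ) = 0 := by
      intro θ
      have hrefl := Finset.sum_range_reflect
        (fun j => (c j:ℝ) * Real.sin (((j:ℝ) - (m:ℝ)) * θ)) (k+1)
      simp only [Nat.add_sub_cancel] at hrefl
      have hterm : ∀ j ∈ range (k+1),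
          (c (k - j):ℝ) * Real.sin ((((k - j : ℕ):ℝ) - (m:ℝ)) * θ)
          = -((c j:ℝ) * Real.sin (((j:ℝ) - (m:ℝ)) * θ)) := by
        intro j hj
        have hjk : j ≤ k := Nat.lt_succ_iff.mp (mem_range.mp hj)
        rw [← hsym j hjk]
        have hcast : ((k - j : ℕ):ℝ) = (k:ℝ) - (j:ℝ) := by
          exact Nat.cast_sub hjk
        have hkr : (k:ℝ) = (m:ℝ) + (m:ℝ) := by exact_mod_cast congrArg (Nat.cast : ℕ → ℝ) hkm
        have harg : (((k - j : ℕ):ℝ) - (m:ℝ)) * θ = -((((j:ℝ) - (m:ℝ))) * θ) := by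
          rw [hcast, hkr]; ring
        rw [harg, Real.sin_neg]
        ring
      have h4 : ∑ j ∈ range (k+1), (c j:ℝ) * Real.sin (((j:ℝ) - (m:ℝ)) * θ)
          = -∑ j ∈ range (k+1), (c j:ℝ) * Real.sin (((j:ℝ) - (m:ℝ)) * θ) := by
        conv_lhs => rw [← hrefl]
        rw [Finset.sum_congr rfl hterm, ← Finset.sum_neg_distrib]
      linarith
    have hexp : ∀ θ : ℝ, (∑ j ∈ range (k+1), (c j:ℂ) * (Complex.exp ((θ:ℂ) * Complex.I))^j)
        = Complex.exp ((((m:ℝ)*θ : ℝ):ℂ) * Complex.I) * ((f θ : ℝ) : ℂ) := by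
      intro θ
      have hterm : ∀ j ∈ range (k+1), (c j:ℂ) * (Complex.exp ((θ:ℂ) * Complex.I))^j
          = Complex.exp ((((m:ℝ)*θ : ℝ):ℂ) * Complex.I) *
            ((((c j:ℝ) * Real.cos (((j:ℝ) - (m:ℝ)) * θ) : ℝ):ℂ)
              + (((c j:ℝ) * Real.sin (((j:ℝ) - (m:ℝ)) * θ) : ℝ):ℂ) * Complex.I) := by
        intro j _
        rw [← Complex.exp_nat_mul]
        have e1 : Complex.exp ((((m:ℝ)*θ : ℝ):ℂ) * Complex.I)
            * Complex.exp ((((((j:ℝ) - (m:ℝ)) * θ) : ℝ):ℂ) * Complex.I)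
            = Complex.exp ((j:ℕ) * ((θ:ℂ) * Complex.I)) := by
          rw [← Complex.exp_add]
          congr 1
          push_cast
          ring
        have e2 : (c j:ℂ) * Complex.exp ((j:ℕ) * ((θ:ℂ) * Complex.I))
            = Complex.exp ((((m:ℝ)*θ : ℝ):ℂ) * Complex.I)
              * ((c j:ℂ) * Complex.exp ((((((j:ℝ) - (m:ℝ)) * θ) : ℝ):ℂ) * Complex.I)) := by
          rw [← e1]; ring
        have e3 : Complex.exp ((((((j:ℝ) - (m:ℝ)) * θ) : ℝ):ℂ) * Complex.I)
            = ((Real.cos (((j:ℝ) - (m:ℝ)) * θ) : ℝ):ℂ)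
              + ((Real.sin (((j:ℝ) - (m:ℝ)) * θ) : ℝ):ℂ) * Complex.I := by
          rw [Complex.exp_mul_I, Complex.ofReal_cos, Complex.ofReal_sin]
        rw [e2, e3]
        push_cast
        ring
      rw [Finset.sum_congr rfl hterm, ← Finset.mul_sum]
      congr 1
      rw [Finset.sum_add_distrib, ← Finset.sum_mul]
      have hA : ∑ j ∈ range (k+1), (((c j:ℝ) * Real.cos (((j:ℝ) - (m:ℝ)) * θ) : ℝ):ℂ)
          = ((f θ : ℝ):ℂ) := by
        rw [hfapp]
        push_cast
        rfl
      have hB : ∑ j ∈ range (k+1), (((c j:ℝ) * Real.sin (((j:ℝ) - (m:ℝ)) * θ) : ℝ):ℂ)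
          = 0 := by
        rw [show (0:ℂ) = ((0:ℝ):ℂ) from by norm_num, ← hsin0 θ]
        push_cast
        rfl
      rw [hA, hB]
      ring
    -- sampled sum
    have hsc : ∀ a : ℤ, a.natAbs < M →
        ∑ t ∈ range M, Real.cos (2*Real.pi*(a:ℝ)*t/M) = (if a = 0 then (M:ℝ) else 0) :=
      fun a ha => PalinAux1089.sum_cos_eq M (by omega) a ha
    have step1 : ∀ t ∈ range M, f (2*Real.pi*t/M) * (1 - Real.cos (2*Real.pi*t/M))
        = ∑ j ∈ range (k+1), ((c j:ℝ) * Real.cos (2*Real.pi*((((j:ℤ) - (m:ℤ)):ℤ):ℝ)*t/M)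
           - (c j:ℝ)/2 * Real.cos (2*Real.pi*((((j:ℤ) - (m:ℤ) + 1):ℤ):ℝ)*t/M)
           - (c j:ℝ)/2 * Real.cos (2*Real.pi*((((j:ℤ) - (m:ℤ) - 1):ℤ):ℝ)*t/M)) := by
      intro t _
      rw [hfapp, Finset.sum_mul]
      refine sum_congr rfl ?_
      intro j _
      have e0 : 2*Real.pi*((((j:ℤ) - (m:ℤ)):ℤ):ℝ)*t/M = (((j:ℝ) - (m:ℝ)) * (2*Real.pi*t/M)) := by
        push_cast; ring
      have e1 : 2*Real.pi*((((j:ℤ) - (m:ℤ) + 1):ℤ):ℝ)*t/M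
          = (((j:ℝ) - (m:ℝ)) * (2*Real.pi*t/M)) + (2*Real.pi*t/M) := by
        push_cast; ring
      have e2 : 2*Real.pi*((((j:ℤ) - (m:ℤ) - 1):ℤ):ℝ)*t/M
          = (((j:ℝ) - (m:ℝ)) * (2*Real.pi*t/M)) - (2*Real.pi*t/M) := by
        push_cast; ring
      rw [e0, e1, e2, Real.cos_add, Real.cos_sub]
      ring
    have step3 : ∀ j ∈ range (k+1),
        ∑ t ∈ range M, ((c j:ℝ) * Real.cos (2*Real.pi*((((j:ℤ) - (m:ℤ)):ℤ):ℝ)*t/M)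
           - (c j:ℝ)/2 * Real.cos (2*Real.pi*((((j:ℤ) - (m:ℤ) + 1):ℤ):ℝ)*t/M)
           - (c j:ℝ)/2 * Real.cos (2*Real.pi*((((j:ℤ) - (m:ℤ) - 1):ℤ):ℝ)*t/M))
        = (c j:ℝ) * (if ((j:ℤ) - (m:ℤ)) = 0 then (M:ℝ) else 0)
          - (c j:ℝ)/2 * (if ((j:ℤ) - (m:ℤ) + 1) = 0 then (M:ℝ) else 0)
          - (c j:ℝ)/2 * (if ((j:ℤ) - (m:ℤ) - 1) = 0 then (M:ℝ) else 0) := by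
      intro j hj
      have hjk : j ≤ k := Nat.lt_succ_iff.mp (mem_range.mp hj)
      rw [Finset.sum_sub_distrib, Finset.sum_sub_distrib,
        ← Finset.mul_sum, ← Finset.mul_sum, ← Finset.mul_sum]
      rw [hsc ((j:ℤ) - (m:ℤ)) (by omega), hsc ((j:ℤ) - (m:ℤ) + 1) (by omega),
        hsc ((j:ℤ) - (m:ℤ) - 1) (by omega)]
    have hkeysum : ∑ t ∈ range M, f (2*Real.pi*t/M) * (1 - Real.cos (2*Real.pi*t/M))
        = (M:ℝ) * ((c m:ℝ) - ((c (m-1):ℝ) + (c (m+1):ℝ))/2) := by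
      rw [Finset.sum_congr rfl step1, Finset.sum_comm, Finset.sum_congr rfl step3]
      rw [Finset.sum_sub_distrib, Finset.sum_sub_distrib]
      have hS1 : ∑ j ∈ range (k+1), (c j:ℝ) * (if ((j:ℤ) - (m:ℤ)) = 0 then (M:ℝ) else 0)
          = (c m:ℝ) * M := by
        rw [Finset.sum_eq_single m]
        · rw [if_pos (by omega)]
        · intro j _ hne
          rw [if_neg (by omega), mul_zero]
        · intro habs
          exact absurd (mem_range.mpr (by omega)) habs
      have hS2 : ∑ j ∈ range (k+1), (c j:ℝ)/2 * (if ((j:ℤ) - (m:ℤ) + 1) = 0 then (M:ℝ) else 0)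
          = (c (m-1):ℝ)/2 * M := by
        rw [Finset.sum_eq_single (m-1)]
        · rw [if_pos (by omega)]
        · intro j _ hne
          rw [if_neg (by omega), mul_zero]
        · intro habs
          exact absurd (mem_range.mpr (by omega)) habs
      have hS3 : ∑ j ∈ range (k+1), (c j:ℝ)/2 * (if ((j:ℤ) - (m:ℤ) - 1) = 0 then (M:ℝ) else 0)
          = (c (m+1):ℝ)/2 * M := by
        rw [Finset.sum_eq_single (m+1)]
        · rw [if_pos (by omega)]
        · intro j _ hne
          rw [if_neg (by omega), mul_zero]
        · intro habs
          exact absurd (mem_range.mpr (by omega)) habs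
      rw [hS1, hS2, hS3]
      ring
    have hA_le : ∑ t ∈ range M, f (2*Real.pi*t/M) * (1 - Real.cos (2*Real.pi*t/M)) ≤ 0 := by
      rw [hkeysum]
      apply mul_nonpos_of_nonneg_of_nonpos
      · positivity
      · have h1 : (c (m+1):ℝ) = (c (m-1):ℝ) := by exact_mod_cast congrArg (Int.cast : ℤ → ℝ) hsym_m1
        have h2 : (c m:ℝ) ≤ (c (m-1):ℝ) := by exact_mod_cast hkey
        linarith
    have hex : ∃ θ0 : ℝ, 0 ≤ θ0 ∧ f θ0 ≤ 0 := by
      by_contra hcon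
      push_neg at hcon
      have hterm_nonneg : ∀ t ∈ range M, 0 ≤ f (2*Real.pi*t/M) * (1 - Real.cos (2*Real.pi*t/M)) := by
        intro t _
        apply mul_nonneg
        · exact le_of_lt (hcon _ (by positivity))
        · nlinarith [Real.cos_le_one (2*Real.pi*t/M)]
      have hcos1 : Real.cos (2*Real.pi*((1:ℕ):ℝ)/M) < 1 := by
        have harg : 2*Real.pi*((1:ℕ):ℝ)/M = 2*Real.pi/M := by push_cast; ring
        rw [harg]
        have h0 : (0:ℝ) < 2*Real.pi/M := by positivity
        have hle : 2*Real.pi/M ≤ Real.pi := by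
          rw [div_le_iff₀ (by positivity)]
          have h4 : (4:ℝ) ≤ M := by exact_mod_cast hM4
          nlinarith [Real.pi_pos]
        have hmono := Real.strictAntiOn_cos ⟨le_rfl, Real.pi_nonneg⟩ ⟨le_of_lt h0, hle⟩ h0
        rw [Real.cos_zero] at hmono
        exact hmono
      have hpos : 0 < ∑ t ∈ range M, f (2*Real.pi*t/M) * (1 - Real.cos (2*Real.pi*t/M)) := by
        apply Finset.sum_pos' hterm_nonneg
        refine ⟨1, mem_range.mpr (by omega), ?_⟩
        apply mul_pos (hcon _ (by positivity))
        linarith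
      linarith
    obtain ⟨θ0, hθ0nn, hθ0⟩ := hex
    obtain ⟨θs, _, hθs⟩ := intermediate_value_Icc' hθ0nn hcont.continuousOn ⟨hθ0, le_of_lt hf0⟩
    refine ⟨Complex.exp ((θs:ℂ) * Complex.I), Complex.norm_exp_ofReal_mul_I θs, ?_⟩
    rw [hexp θs, hθs]
    simp
  · -- odd case
    refine ⟨-1, by simp, ?_⟩
    have hrefl := Finset.sum_range_reflect (fun j => (c j:ℂ) * (-1:ℂ)^j) (k+1)
    simp only [Nat.add_sub_cancel] at hrefl
    have hterm : ∀ j ∈ range (k+1), (c (k - j) : ℂ) * (-1:ℂ)^(k - j) = -((c j:ℂ) * (-1:ℂ)^j) := by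
      intro j hj
      have hjk : j ≤ k := Nat.lt_succ_iff.mp (mem_range.mp hj)
      rw [← hsym j hjk]
      have hkodd : k % 2 = 1 := Nat.odd_iff.mp hko
      rcases Nat.even_or_odd j with hpar | hpar
      · have hje : j % 2 = 0 := Nat.even_iff.mp hpar
        have h1 : Odd (k - j) := Nat.odd_iff.mpr (by omega)
        rw [h1.neg_one_pow, hpar.neg_one_pow]
        ring
      · have hjo : j % 2 = 1 := Nat.odd_iff.mp hpar
        have h1 : Even (k - j) := Nat.even_iff.mpr (by omega)
        rw [h1.neg_one_pow, hpar.neg_one_pow]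
        ring
    have h4 : ∑ j ∈ range (k+1), (c j:ℂ) * (-1:ℂ)^j
        = -∑ j ∈ range (k+1), (c j:ℂ) * (-1:ℂ)^j := by
      conv_lhs => rw [← hrefl]
      rw [Finset.sum_congr rfl hterm, ← Finset.sum_neg_distrib]
    exact add_self_eq_zero.mp (by linear_combination h4)
end

section
/- Let (d_k, ..., d_0) be a 1089 (n,b)-palintiple (a symmetric (n,b)-palintiple with n+1 dividing b), with palinomial Pal(X), digit polynomial D(X), and reverse-digit polynomial R(X). Then the following identities hold in ℤ[X]: (n−1)·(X−b)·D(X) = (d_k·X² − X + d_0)·Pal(X) and (n−1)·(X−b)·R(X) = (d_0·X² − X + d_k)·Pal(X). -/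
open Finset Polynomial

/-- The palinomial of the `(n,b)`-palintiple with digits `d 0, ..., d k`. -/
noncomputable def palinomial (n : ℤ) (k : ℕ) (d : ℕ → ℤ) : Polynomial ℤ :=
  ∑ j ∈ Finset.range (k + 1), Polynomial.C (d j - n * d (k - j)) * Polynomial.X ^ j

/-- The digit polynomial of the palintiple with digits `d 0, ..., d k`. -/
noncomputable def digitPoly (k : ℕ) (d : ℕ → ℤ) : Polynomial ℤ :=
  ∑ j ∈ Finset.range (k + 1), Polynomial.C (d j) * Polynomial.X ^ j

/-- The reverse-digit polynomial of the palintiple with digits `d 0, ..., d k`. -/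
noncomputable def revDigitPoly (k : ℕ) (d : ℕ → ℤ) : Polynomial ℤ :=
  ∑ j ∈ Finset.range (k + 1), Polynomial.C (d (k - j)) * Polynomial.X ^ j

/-- **Theorem.** For a 1089 `(n,b)`-palintiple,
`(n-1)(X-b)·D(X) = (d_k X² - X + d_0)·Pal(X)` and
`(n-1)(X-b)·R(X) = (d_0 X² - X + d_k)·Pal(X)` in `ℤ[X]`. -/
theorem digit_poly_factorization_1089 (n b : ℤ) (k : ℕ) (d c : ℕ → ℤ)
    (hp : IsPalintiple n b k d) (hc : IsCarries n b k d c)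
    (hsym : IsSym k c) (hdvd : n + 1 ∣ b) :
    C (n - 1) * (X - C b) * digitPoly k d =
      (C (d k) * X ^ 2 - X + C (d 0)) * palinomial n k d ∧
    C (n - 1) * (X - C b) * revDigitPoly k d =
      (C (d 0) * X ^ 2 - X + C (d k)) * palinomial n k d := by
  obtain ⟨hn, hnb, hk, hdig, hdk0, hd00, hsumeq⟩ := hp
  obtain ⟨hc0, hrec⟩ := hc
  obtain ⟨m, hm⟩ := hdvd
  have hb0 : (0:ℤ) < b := by linarith
  have hn1 : (0:ℤ) < n - 1 := by linarith
  have hn1' : (n - 1 : ℤ) ≠ 0 := ne_of_gt hn1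
  have hnp1 : (0:ℤ) < n + 1 := by linarith
  have hnp1' : (n + 1 : ℤ) ≠ 0 := ne_of_gt hnp1
  have hm0 : (0:ℤ) < m := by nlinarith
  have hd0pos : 0 < d 0 := lt_of_le_of_ne (hdig 0 (Nat.zero_le k)).1 (Ne.symm hd00)
  -- c (k+1) = 0
  have hck1 : c (k + 1) = 0 := by
    have h1 : ∑ j ∈ range (k+1), (n * d (k-j) + c j) * b ^ j
        = ∑ j ∈ range (k+1), (d j + b * c (j+1)) * b ^ j :=
      Finset.sum_congr rfl fun j hj => by
        rw [hrec j (by simpa [Nat.lt_succ_iff] using hj)]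
    have h2 : ∑ j ∈ range (k+1), c j * b ^ j
        = ∑ j ∈ range (k+1), c (j+1) * b ^ (j+1) := by
      have e1 : ∑ j ∈ range (k+1), (n * d (k-j) + c j) * b ^ j
          = n * (∑ j ∈ range (k+1), d (k-j) * b ^ j) + ∑ j ∈ range (k+1), c j * b ^ j := by
        rw [Finset.mul_sum, ← Finset.sum_add_distrib]
        exact Finset.sum_congr rfl fun j _ => by ring
      have e2 : ∑ j ∈ range (k+1), (d j + b * c (j+1)) * b ^ j
          = (∑ j ∈ range (k+1), d j * b ^ j) + ∑ j ∈ range (k+1), c (j+1) * b ^ (j+1) := by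
        rw [← Finset.sum_add_distrib]
        exact Finset.sum_congr rfl fun j _ => by ring
      rw [e1, e2] at h1
      rw [hsumeq] at h1
      linarith
    have h3 : ∑ j ∈ range (k+2), c j * b ^ j
        = (∑ j ∈ range (k+1), c (j+1) * b ^ (j+1)) + c 0 * b ^ 0 :=
      Finset.sum_range_succ' _ _
    have h4 : ∑ j ∈ range (k+2), c j * b ^ j
        = (∑ j ∈ range (k+1), c j * b ^ j) + c (k+1) * b ^ (k+1) :=
      Finset.sum_range_succ _ _
    have h5 : c (k+1) * b ^ (k+1) = 0 := by
      rw [hc0] at h3; rw [h3, ← h2] at h4; linarith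
    have hbk : (b:ℤ) ^ (k+1) ≠ 0 := pow_ne_zero _ (ne_of_gt hb0)
    exact (mul_eq_zero.mp h5).resolve_right hbk
  have hck : c k = 0 := by
    have := hsym 0 (Nat.zero_le k)
    simp only [Nat.sub_zero] at this
    rw [← this, hc0]
  have hdk_eq : d k = n * d 0 := by
    have h := hrec k le_rfl
    rw [Nat.sub_self, hck, hck1] at h
    linarith
  have h0 : n * d k = d 0 + b * c 1 := by
    have h := hrec 0 (Nat.zero_le k)
    rw [Nat.sub_zero, hc0] at h
    linarith
  have hA0 : (n - 1) * d 0 = m * c 1 := by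
    apply mul_left_cancel₀ hnp1'
    have h0' : n * (n * d 0) = d 0 + ((n+1) * m) * c 1 := by
      rw [← hdk_eq, ← hm]; exact h0
    linarith [h0']
  have hc1pos : 0 < c 1 := by nlinarith
  have hc1le : c 1 ≤ n - 1 := by
    have hdkle := (hdig k le_rfl).2
    by_contra hcon
    push_neg at hcon
    have : n ≤ c 1 := by linarith
    nlinarith
  -- the carry polynomial
  set S : Polynomial ℤ := ∑ j ∈ range k, C (c (j+1)) * X ^ j with hS
  have hXS : (X : Polynomial ℤ) * S = ∑ j ∈ range k, C (c (j+1)) * X ^ (j+1) := by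
    rw [hS, Finset.mul_sum]
    exact Finset.sum_congr rfl fun j _ => by ring
  have hA : (∑ j ∈ range (k+1), C (c j) * X ^ j) = X * S := by
    rw [Finset.sum_range_succ', hXS, hc0]
    simp
  have hB : (∑ j ∈ range (k+1), C (b * c (j+1)) * X ^ j) = C b * S := by
    rw [Finset.sum_range_succ, hck1, hS, Finset.mul_sum]
    simp only [mul_zero, map_zero, zero_mul, add_zero]
    exact Finset.sum_congr rfl fun j _ => by rw [C_mul]; ring
  have hB2 : (∑ j ∈ range (k+1), C (b * c (j-1)) * X ^ j) = C b * X ^ 2 * S := by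
    obtain ⟨k', rfl⟩ : ∃ k', k = k' + 1 := ⟨k - 1, by omega⟩
    have hrhs : C b * X ^ 2 * S = ∑ j ∈ range (k'+1), C (b * c (j+1)) * X ^ (j+2) := by
      rw [hS, Finset.mul_sum]
      exact Finset.sum_congr rfl fun j _ => by rw [C_mul]; ring
    rw [hrhs, Finset.sum_range_succ (fun j => C (b * c (j+1)) * X ^ (j+2)) k']
    have hcktop : c (k' + 1) = 0 := hck
    rw [hcktop]
    simp only [mul_zero, map_zero, zero_mul, add_zero]
    rw [Finset.sum_range_succ' (fun j => C (b * c (j-1)) * X ^ j) (k'+1)]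
    simp only [Nat.add_sub_cancel, Nat.zero_sub, hc0, mul_zero, map_zero, zero_mul, add_zero, pow_zero]
    rw [Finset.sum_range_succ' (fun j => C (b * c j) * X ^ (j+1)) k']
    simp only [hc0, mul_zero, map_zero, zero_mul, add_zero]
  have hkey : (∑ j ∈ range (k+1), C (d j - n * d (k-j)) * X ^ j) = (X - C b) * S := by
    have step1 : ∀ j ∈ range (k+1),
        C (d j - n * d (k-j)) * X ^ j = C (c j) * X ^ j - C (b * c (j+1)) * X ^ j := by
      intro j hj
      rw [mem_range, Nat.lt_succ_iff] at hj
      have h := hrec j hj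
      have hd : d j - n * d (k-j) = c j - b * c (j+1) := by linarith
      rw [hd, C_sub]; ring
    rw [Finset.sum_congr rfl step1, Finset.sum_sub_distrib, hA, hB]
    ring
  have hPal : palinomial n k d = (X - C b) * S := hkey
  have hE1 : digitPoly k d - C n * revDigitPoly k d = (X - C b) * S := by
    rw [digitPoly, revDigitPoly, Finset.mul_sum, ← Finset.sum_sub_distrib, ← hkey]
    exact Finset.sum_congr rfl fun j _ => by rw [C_sub, C_mul]; ring
  have hE2 : revDigitPoly k d - C n * digitPoly k d = (X - C b * X ^ 2) * S := by
    have step2 : ∀ j ∈ range (k+1),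
        C (d (k-j)) * X ^ j - C n * (C (d j) * X ^ j)
          = C (c j) * X ^ j - C (b * c (j-1)) * X ^ j := by
      intro j hj
      rw [mem_range, Nat.lt_succ_iff] at hj
      have h := hrec (k - j) (Nat.sub_le k j)
      rw [Nat.sub_sub_self hj] at h
      have hsymj : c (k - j) = c j := (hsym j hj).symm
      have hnext : c (k - j + 1) = c (j - 1) := by
        match j, hj with
        | 0, _ => simp [hck1, hc0]
        | (i+1), hj =>
          have h1 : k - (i+1) + 1 = k - i := by omega
          have h2 : i + 1 - 1 = i := rfl
          rw [h1, h2]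
          exact (hsym i (by omega)).symm
      have hd : d (k-j) - n * d j = c j - b * c (j-1) := by
        rw [← hsymj, ← hnext]; linarith
      have : C (d (k-j)) * X ^ j - C n * (C (d j) * X ^ j)
          = C (d (k-j) - n * d j) * X ^ j := by rw [C_sub, C_mul]; ring
      rw [this, hd, C_sub]; ring
    rw [revDigitPoly, digitPoly, Finset.mul_sum, ← Finset.sum_sub_distrib,
      Finset.sum_congr rfl step2, Finset.sum_sub_distrib, hA, hB2]
    ring
  -- combine to get the key factorizations
  have hCb : (C b : Polynomial ℤ) = (C n + 1) * C m := by
    rw [hm, C_mul, C_add, C_1]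
  have hCn1ne : (C n + 1 : Polynomial ℤ) ≠ 0 := by
    intro h
    have : (C (n+1) : Polynomial ℤ) = 0 := by rw [C_add, C_1]; exact h
    exact hnp1' (by simpa using (C_eq_zero.mp this))
  have hfS : C (n - 1) * digitPoly k d = (C (n * m) * X ^ 2 - X + C m) * S := by
    have h3 : (C n + 1) * ((C n - 1) * digitPoly k d)
        = (C n + 1) * ((C n * C m * X ^ 2 - X + C m) * S) := by
      linear_combination (-(1:Polynomial ℤ)) * hE1 - C n * hE2 + (C n * X ^ 2 + 1) * S * hCb
    have h4 := mul_left_cancel₀ hCn1ne h3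
    rw [C_sub, C_1, C_mul]
    exact h4
  have hgS : C (n - 1) * revDigitPoly k d = (C m * X ^ 2 - X + C (n * m)) * S := by
    have h3 : (C n + 1) * ((C n - 1) * revDigitPoly k d)
        = (C n + 1) * ((C m * X ^ 2 - X + C n * C m) * S) := by
      linear_combination (-(C n : Polynomial ℤ)) * hE1 - (1:Polynomial ℤ) * hE2 + (X ^ 2 + C n) * S * hCb
    have h4 := mul_left_cancel₀ hCn1ne h3
    rw [C_sub, C_1, C_mul]
    exact h4
  -- content argument : (n-1) ∣ c 1
  have hfcont : (C (n * m) * X ^ 2 - X + C m : Polynomial ℤ).content = 1 := by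
    have hco : (C (n * m) * X ^ 2 - X + C m : Polynomial ℤ).coeff 1 = -1 := by
      simp only [coeff_add, coeff_sub, coeff_C_mul, coeff_X_pow, coeff_X_one, coeff_C]
      norm_num
    have hdc := Polynomial.content_dvd_coeff (p := (C (n * m) * X ^ 2 - X + C m : Polynomial ℤ)) 1
    rw [hco] at hdc
    have hu : IsUnit ((C (n * m) * X ^ 2 - X + C m : Polynomial ℤ).content) :=
      isUnit_of_dvd_unit hdc (IsUnit.neg isUnit_one)
    rcases Int.isUnit_iff.mp hu with h | h
    · exact h
    · exfalso
      have := Polynomial.normalize_content (p := (C (n * m) * X ^ 2 - X + C m : Polynomial ℤ))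
      rw [h, Int.normalize_of_nonpos (by norm_num)] at this
      norm_num at this
  have hcontS : (n - 1) ∣ S.content := by
    have h1 : (C (n - 1) * digitPoly k d).content
        = ((C (n * m) * X ^ 2 - X + C m : Polynomial ℤ) * S).content := by rw [hfS]
    rw [Polynomial.content_C_mul, Polynomial.content_mul, hfcont, one_mul] at h1
    have h2 : normalize (n - 1) ∣ S.content := ⟨_, h1.symm⟩
    exact (normalize_dvd_iff).mp h2
  have hScoeff0 : S.coeff 0 = c 1 := by
    rw [hS, Polynomial.finset_sum_coeff]
    have : ∀ j ∈ range k, (C (c (j+1)) * X ^ j).coeff 0 = if j = 0 then c 1 else 0 := by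
      intro j _
      rcases Nat.eq_zero_or_pos j with h | h
      · subst h; simp
      · rw [if_neg (by omega)]
        simp only [coeff_C_mul, coeff_X_pow]
        rw [if_neg (by omega)]
        ring
    rw [Finset.sum_congr rfl this, Finset.sum_ite_eq' (range k) 0 (fun _ => c 1)]
    rw [if_pos (by simp; omega)]
  have hc1dvd : (n - 1) ∣ c 1 := by
    rw [← hScoeff0]
    exact dvd_trans hcontS (Polynomial.content_dvd_coeff 0)
  -- conclude c 1 = n - 1, d 0 = m, d k = n * m
  have hc1 : c 1 = n - 1 := by
    obtain ⟨t, ht⟩ := hc1dvd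
    have ht1 : t = 1 := by nlinarith
    rw [ht, ht1, mul_one]
  have hd0m : d 0 = m := by
    have : (n - 1) * d 0 = (n - 1) * m := by rw [hA0, hc1]; ring
    exact mul_left_cancel₀ hn1' this
  have hdkm : d k = n * m := by rw [hdk_eq, hd0m]
  constructor
  · rw [hd0m, hdkm, hPal]
    calc C (n-1) * (X - C b) * digitPoly k d
        = (X - C b) * (C (n-1) * digitPoly k d) := by ring
      _ = (X - C b) * ((C (n * m) * X ^ 2 - X + C m) * S) := by rw [hfS]
      _ = (C (n * m) * X ^ 2 - X + C m) * ((X - C b) * S) := by ring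
  · rw [hd0m, hdkm, hPal]
    calc C (n-1) * (X - C b) * revDigitPoly k d
        = (X - C b) * (C (n-1) * revDigitPoly k d) := by ring
      _ = (X - C b) * ((C m * X ^ 2 - X + C (n * m)) * S) := by rw [hgS]
      _ = (C m * X ^ 2 - X + C (n * m)) * ((X - C b) * S) := by ring
end

section
/- Let (d_k, ..., d_0) be a shifted-symmetric (n,b)-palintiple with carries c_0, ..., c_{k+1}, palinomial Pal(X), digit polynomial D(X), and reverse-digit polynomial R(X). Then the following identities hold in ℤ[X]: c_k·(X−b)·D(X) = (d_k·X + d_0)·Pal(X) and c_k·(X−b)·R(X) = (d_0·X + d_k)·Pal(X). -/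
open Finset Polynomial

/-- **Theorem.** For a shifted-symmetric `(n,b)`-palintiple,
`c_k (X-b)·D(X) = (d_k X + d_0)·Pal(X)` and
`c_k (X-b)·R(X) = (d_0 X + d_k)·Pal(X)` in `ℤ[X]`. -/
theorem digit_poly_factorization_shifted_symmetric (n b : ℤ) (k : ℕ) (d c : ℕ → ℤ)
    (hp : IsPalintiple n b k d) (hc : IsCarries n b k d c)
    (hss : IsShiftedSym k c) :
    C (c k) * (X - C b) * digitPoly k d =
      (C (d k) * X + C (d 0)) * palinomial n k d ∧
    C (c k) * (X - C b) * revDigitPoly k d =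
      (C (d 0) * X + C (d k)) * palinomial n k d := by
  obtain ⟨hn, hnb, hk1, hdig, hdk0, hd00, hsum⟩ := hp
  obtain ⟨h0, hrec⟩ := hc
  have hb1 : (1:ℤ) < b := lt_trans hn hnb
  -- c (k+1) = 0
  have hck1 : c (k+1) = 0 := by
    have hs : ∑ j ∈ range (k+1), (n * d (k-j) + c j) * b^j
        = ∑ j ∈ range (k+1), (d j + b * c (j+1)) * b^j :=
      Finset.sum_congr rfl fun j hj => by
        rw [hrec j (Nat.lt_succ_iff.mp (mem_range.mp hj))]
    simp only [add_mul] at hs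
    rw [Finset.sum_add_distrib, Finset.sum_add_distrib] at hs
    have h1 : ∑ j ∈ range (k+1), n * d (k-j) * b^j = ∑ j ∈ range (k+1), d j * b^j := by
      rw [hsum, Finset.mul_sum]
      exact Finset.sum_congr rfl fun j _ => by ring
    have h2' : ∑ j ∈ range (k+1), b * c (j+1) * b^j
        = ∑ j ∈ range (k+1), c (j+1) * b^(j+1) :=
      Finset.sum_congr rfl fun j _ => by ring
    have h2 : ∑ j ∈ range (k+1), c j * b^j = ∑ j ∈ range (k+1), c (j+1) * b^(j+1) := by
      linarith
    rw [Finset.sum_range_succ' (fun j => c j * b^j) k, Finset.sum_range_succ] at h2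
    simp only [h0, zero_mul, add_zero, pow_zero, mul_one] at h2
    have hmul : c (k+1) * b^(k+1) = 0 := by linarith
    have hbne : b ^ (k+1) ≠ 0 := pow_ne_zero _ (by linarith : b ≠ 0)
    exact (mul_eq_zero.mp hmul).resolve_right hbne
  have hn2 : (n^2 - 1 : ℤ) ≠ 0 := by nlinarith
  have hd' : ∀ j ≤ k, (n^2 - 1) * d j = (b - n) * c (j+1) + (n*b - 1) * c j := by
    intro j hj
    have h1 := hrec j hj
    have h2 := hrec (k - j) (Nat.sub_le k j)
    rw [Nat.sub_sub_self hj] at h2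
    have e1 : c (k - j) = c (j+1) := by
      have := hss (k - j) (Nat.sub_le k j); rwa [Nat.sub_sub_self hj] at this
    have e2 : c (k - j + 1) = c j := (hss j hj).symm
    rw [e1, e2] at h2
    linear_combination h1 + n * h2
  have hdk' : (n^2 - 1) * d k = (n*b - 1) * c k := by
    have := hd' k le_rfl
    rw [hck1] at this; linarith
  have hc1 : c 1 = c k := by
    have := hss 1 hk1; rwa [Nat.sub_add_cancel hk1] at this
  have hd0' : (n^2 - 1) * d 0 = (b - n) * c k := by
    have := hd' 0 (Nat.zero_le k)
    rw [h0, hc1] at this; linarith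
  have key1 : ∀ j ≤ k, c k * d j = d k * c j + d 0 * c (j+1) := by
    intro j hj
    have h := hd' j hj
    apply mul_left_cancel₀ hn2
    linear_combination (c k) * h - (c j) * hdk' - (c (j+1)) * hd0'
  have key2 : ∀ j ≤ k, c k * d (k - j) = d 0 * c j + d k * c (j+1) := by
    intro j hj
    have h := hd' (k-j) (Nat.sub_le k j)
    have e1 : c (k - j) = c (j+1) := by
      have := hss (k - j) (Nat.sub_le k j); rwa [Nat.sub_sub_self hj] at this
    have e2 : c (k - j + 1) = c j := (hss j hj).symm
    rw [e1, e2] at h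
    apply mul_left_cancel₀ hn2
    linear_combination (c k) * h - (c (j+1)) * hdk' - (c j) * hd0'
  -- shift lemma
  have shift : ∀ f : ℕ → ℤ, f 0 = 0 → f (k+1) = 0 →
      (∑ j ∈ range (k+1), C (f (j+1)) * X^(j+1) : Polynomial ℤ)
        = ∑ j ∈ range (k+1), C (f j) * X^j := by
    intro f hf0 hfk
    rw [Finset.sum_range_succ, Finset.sum_range_succ' (fun j => (C (f j) * X^j : Polynomial ℤ)) k,
      hf0, hfk]
    simp
  have hA : palinomial n k d = (X - C b) * ∑ j ∈ range (k+1), C (c (j+1)) * X^j := by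
    rw [sub_mul, Finset.mul_sum, Finset.mul_sum]
    have l1 : ∀ j ∈ range (k+1), (X * (C (c (j+1)) * X^j) : Polynomial ℤ)
        = C (c (j+1)) * X^(j+1) := fun j _ => by ring
    rw [Finset.sum_congr rfl l1, shift c h0 hck1]
    unfold palinomial
    rw [← Finset.sum_sub_distrib]
    apply Finset.sum_congr rfl
    intro j hj
    have hj' : j ≤ k := Nat.lt_succ_iff.mp (mem_range.mp hj)
    have hco : d j - n * d (k - j) = c j - b * c (j+1) := by linarith [hrec j hj']
    rw [hco, map_sub, map_mul]
    ring
  have hB : C (c k) * digitPoly k d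
      = (C (d k) * X + C (d 0)) * ∑ j ∈ range (k+1), C (c (j+1)) * X^j := by
    rw [add_mul, Finset.mul_sum, Finset.mul_sum]
    have l1 : ∀ j ∈ range (k+1), (C (d k) * X * (C (c (j+1)) * X^j) : Polynomial ℤ)
        = C (d k * c (j+1)) * X^(j+1) := fun j _ => by rw [map_mul]; ring
    have l2 : ∀ j ∈ range (k+1), (C (d 0) * (C (c (j+1)) * X^j) : Polynomial ℤ)
        = C (d 0 * c (j+1)) * X^j := fun j _ => by rw [map_mul]; ring
    have s1 := shift (fun j => d k * c j) (by simp [h0]) (by simp [hck1])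
    rw [Finset.sum_congr rfl l1, Finset.sum_congr rfl l2, s1]
    unfold digitPoly
    rw [Finset.mul_sum, ← Finset.sum_add_distrib]
    apply Finset.sum_congr rfl
    intro j hj
    have hj' : j ≤ k := Nat.lt_succ_iff.mp (mem_range.mp hj)
    calc C (c k) * (C (d j) * X ^ j) = C (c k * d j) * X^j := by rw [map_mul]; ring
      _ = C (d k * c j + d 0 * c (j+1)) * X^j := by rw [key1 j hj']
      _ = C (d k * c j) * X^j + C (d 0 * c (j+1)) * X^j := by rw [map_add, add_mul]
  have hB' : C (c k) * revDigitPoly k d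
      = (C (d 0) * X + C (d k)) * ∑ j ∈ range (k+1), C (c (j+1)) * X^j := by
    rw [add_mul, Finset.mul_sum, Finset.mul_sum]
    have l1 : ∀ j ∈ range (k+1), (C (d 0) * X * (C (c (j+1)) * X^j) : Polynomial ℤ)
        = C (d 0 * c (j+1)) * X^(j+1) := fun j _ => by rw [map_mul]; ring
    have l2 : ∀ j ∈ range (k+1), (C (d k) * (C (c (j+1)) * X^j) : Polynomial ℤ)
        = C (d k * c (j+1)) * X^j := fun j _ => by rw [map_mul]; ring
    have s1 := shift (fun j => d 0 * c j) (by simp [h0]) (by simp [hck1])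
    rw [Finset.sum_congr rfl l1, Finset.sum_congr rfl l2, s1]
    unfold revDigitPoly
    rw [Finset.mul_sum, ← Finset.sum_add_distrib]
    apply Finset.sum_congr rfl
    intro j hj
    have hj' : j ≤ k := Nat.lt_succ_iff.mp (mem_range.mp hj)
    calc C (c k) * (C (d (k-j)) * X ^ j) = C (c k * d (k-j)) * X^j := by rw [map_mul]; ring
      _ = C (d 0 * c j + d k * c (j+1)) * X^j := by rw [key2 j hj']
      _ = C (d 0 * c j) * X^j + C (d k * c (j+1)) * X^j := by rw [map_add, add_mul]
  constructor
  · linear_combination (X - C b) * hB - (C (d k) * X + C (d 0)) * hA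
  · linear_combination (X - C b) * hB' - (C (d 0) * X + C (d k)) * hA
end

section
/- Let p = (d_k, ..., d_0) be an (n,b)-palintiple with palinomial Pal(X), and let p̂ be an (n̂,b̂)-palintiple with palinomial Pal̂(X) that is either singly-derived from p (p̂ has k+2 digits and its carries satisfy ĉ_0 = 0 and ĉ_j = d_{j−1} for 1 ≤ j ≤ k+1) or doubly-derived from p (p̂ has k+3 digits and its carries satisfy ĉ_0 = 0, ĉ_j = d_{j−1} for 1 ≤ j ≤ k+1, and ĉ_{k+2} = 0). If p is a 1089 palintiple (symmetric with n+1 dividing b), then in ℤ[X]: (n−1)·(X−b)·Pal̂(X) = (X−b̂)·(d_k·X² − X + d_0)·Pal(X). If p is shifted-symmetric with carries c_0, ..., c_{k+1}, then in ℤ[X]: c_k·(X−b)·Pal̂(X) = (X−b̂)·(d_k·X + d_0)·Pal(X). -/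
open Finset Polynomial

/-! ### Auxiliary lemmas -/

lemma primeStep (p : ℕ) (hp : p.Prime) (m : ℤ) (c : ℕ → ℤ) (K : ℕ)
    (hsupp : ∀ j, K ≤ j → c j = 0)
    (hrel : ∀ j, (p : ℤ) ∣ m * c (j + 1) - c j + m * (if j = 0 then 0 else c (j - 1))) :
    ∀ j, (p : ℤ) ∣ c j := by
  by_cases hm : (p : ℤ) ∣ m
  · intro j
    have h := hrel j
    have h1 : (p : ℤ) ∣ m * c (j + 1) := hm.mul_right _
    have h2 : (p : ℤ) ∣ m * (if j = 0 then 0 else c (j - 1)) := hm.mul_right _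
    have he : c j = (m * c (j + 1) + m * (if j = 0 then 0 else c (j - 1))) -
        (m * c (j + 1) - c j + m * (if j = 0 then 0 else c (j - 1))) := by ring
    rw [he]
    exact dvd_sub (dvd_add h1 h2) h
  · have main : ∀ i j, K ≤ j + i → (p : ℤ) ∣ c j := by
      intro i
      induction i with
      | zero => intro j hj; rw [hsupp j (by omega)]; exact dvd_zero _
      | succ i ih =>
        intro j hj
        have h1 : (p : ℤ) ∣ c (j + 1) := ih (j + 1) (by omega)
        have h2 : (p : ℤ) ∣ c (j + 2) := ih (j + 2) (by omega)
        have h := hrel (j + 1)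
        simp only [Nat.add_sub_cancel, Nat.succ_ne_zero, if_false] at h
        have h3 : (p : ℤ) ∣ m * c j := by
          have he : m * c j = (m * c (j + 1 + 1) - c (j + 1) + m * c j) -
              m * c (j + 1 + 1) + c (j + 1) := by ring
          rw [he]
          exact dvd_add (dvd_sub h (h2.mul_left m)) h1
        rcases Int.Prime.dvd_mul' hp h3 with h4 | h4
        · exact absurd h4 hm
        · exact h4
    intro j
    exact main K j (by omega)

lemma keyDvd : ∀ q : ℕ, 1 ≤ q → ∀ (m : ℤ) (c : ℕ → ℤ) (K : ℕ),
    (∀ j, K ≤ j → c j = 0) →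
    (∀ j, (q : ℤ) ∣ m * c (j + 1) - c j + m * (if j = 0 then 0 else c (j - 1))) →
    ∀ j, (q : ℤ) ∣ c j := by
  intro q
  induction q using Nat.strong_induction_on with
  | _ q IH =>
    intro hq m c K hsupp hrel j
    rcases eq_or_lt_of_le hq with h1 | h2
    · rw [← h1]; simp
    · set p := q.minFac with hpdef
      have hp : p.Prime := Nat.minFac_prime (by omega)
      obtain ⟨q', hq'⟩ := q.minFac_dvd
      have hq'pos : 1 ≤ q' := by
        by_contra h
        have hz : q' = 0 := by omega
        rw [hz, Nat.mul_zero] at hq'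
        omega
      rw [← hpdef] at hq'
      have h2q : 2 * q' ≤ p * q' := Nat.mul_le_mul_right q' hp.two_le
      have hq'lt : q' < q := by omega
      have hpq : (p : ℤ) ∣ (q : ℤ) := Int.natCast_dvd_natCast.mpr ⟨q', hq'⟩
      have hstep : ∀ j, (p : ℤ) ∣ c j :=
        primeStep p hp m c K hsupp (fun j => dvd_trans hpq (hrel j))
      set c' : ℕ → ℤ := fun j => c j / p with hc'def
      have hc' : ∀ j, c j = (p : ℤ) * c' j := fun j => (Int.mul_ediv_cancel' (hstep j)).symm
      have hsupp' : ∀ j, K ≤ j → c' j = 0 := by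
        intro j hj
        simp [hc'def, hsupp j hj]
      have hp0 : (p : ℤ) ≠ 0 := by
        have := hp.two_le; positivity
      have hrel' : ∀ j, (q' : ℤ) ∣ m * c' (j + 1) - c' j + m * (if j = 0 then 0 else c' (j - 1)) := by
        intro j
        have h := hrel j
        have heq : m * c (j + 1) - c j + m * (if j = 0 then 0 else c (j - 1)) =
            (p : ℤ) * (m * c' (j + 1) - c' j + m * (if j = 0 then 0 else c' (j - 1))) := by
          by_cases h0 : j = 0
          · simp only [h0, if_true]
            rw [hc' 1, hc' 0]; ring
          · simp only [h0, if_false]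
            rw [hc' (j + 1), hc' j, hc' (j - 1)]; ring
        rw [heq, hq'] at h
        push_cast at h
        exact (mul_dvd_mul_iff_left hp0).mp h
      have hres := IH q' hq'lt hq'pos m c' K hsupp' hrel' j
      rw [hc' j, hq']
      push_cast
      exact mul_dvd_mul_left _ hres

lemma shiftLemma (k : ℕ) (u v : ℕ → ℤ) (h0 : v 0 = 0) (htop : v (k + 1) = 0)
    (hsh : ∀ j ≤ k, v (j + 1) = u j) :
    X * ∑ j ∈ range (k + 1), C (u j) * X ^ j
      = ∑ j ∈ range (k + 1), C (v j) * X ^ j := by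
  have h1 : X * ∑ j ∈ range (k + 1), C (u j) * X ^ j
      = ∑ j ∈ range (k + 1), C (v (j + 1)) * X ^ (j + 1) := by
    rw [Finset.mul_sum]
    refine Finset.sum_congr rfl fun j hj => ?_
    rw [hsh j (Nat.lt_succ_iff.mp (mem_range.mp hj))]
    ring
  have h2 := Finset.sum_range_succ' (fun j => C (v j) * X ^ j) (k + 1)
  have h3 := Finset.sum_range_succ (fun j => C (v j) * X ^ j) (k + 1)
  rw [h1]
  have h4 := h2.symm.trans h3
  simpa [h0, htop] using h4

lemma sumFactor (b : ℤ) (k : ℕ) (c p : ℕ → ℤ) (hc0 : c 0 = 0) (hck : c (k + 1) = 0)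
    (hp : ∀ j ≤ k, p j = c j - b * c (j + 1)) :
    ∑ j ∈ range (k + 1), C (p j) * X ^ j
      = (X - C b) * ∑ j ∈ range (k + 1), C (c (j + 1)) * X ^ j := by
  have hXR := shiftLemma k (fun j => c (j + 1)) c hc0 hck (fun j _ => rfl)
  rw [sub_mul, hXR, Finset.mul_sum, ← Finset.sum_sub_distrib]
  refine Finset.sum_congr rfl fun j hj => ?_
  rw [hp j (Nat.lt_succ_iff.mp (mem_range.mp hj))]
  rw [map_sub, map_mul]
  ring

lemma carry_top (n b : ℤ) (k : ℕ) (d c : ℕ → ℤ)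
    (hp : IsPalintiple n b k d) (hc : IsCarries n b k d c) : c (k + 1) = 0 := by
  obtain ⟨hn, hb, hk, hd, hdk, hd0, hsum⟩ := hp
  obtain ⟨hc0, hrec⟩ := hc
  have key : ∑ j ∈ range (k + 1), ((fun i => c i * b ^ i) j - (fun i => c i * b ^ i) (j + 1)) = 0 := by
    have h1 : ∑ j ∈ range (k + 1), (c j * b ^ j - c (j + 1) * b ^ (j + 1)) =
        ∑ j ∈ range (k + 1), (d j * b ^ j - n * (d (k - j) * b ^ j)) := by
      refine Finset.sum_congr rfl fun j hj => ?_
      have h := hrec j (Nat.lt_succ_iff.mp (mem_range.mp hj))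
      have he : c j * b ^ j - c (j + 1) * b ^ (j + 1) = (c j - b * c (j + 1)) * b ^ j := by ring
      rw [he]
      have h2 : c j - b * c (j + 1) = d j - n * d (k - j) := by linarith
      rw [h2]; ring
    simp only []
    rw [h1, Finset.sum_sub_distrib, ← Finset.mul_sum, hsum]
    ring
  rw [Finset.sum_range_sub' (fun i => c i * b ^ i) (k + 1)] at key
  simp only [hc0, pow_zero, zero_mul] at key
  have hbne : b ≠ 0 := by intro h; rw [h] at hb; linarith
  have hpow : b ^ (k + 1) ≠ 0 := pow_ne_zero _ hbne
  have hz : c (k + 1) * b ^ (k + 1) = 0 := by linarith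
  rcases mul_eq_zero.mp hz with h | h
  · exact h
  · exact absurd h hpow

/-- **Corollary.** The palinomial of a singly- or doubly-derived palintiple `p̂`
(carry sequence `(d k, ..., d 0, 0)` resp. `(0, d k, ..., d 0, 0)`) factors through
the palinomial of the original palintiple `p`. -/
theorem derived_palinomial_factorization (n b : ℤ) (k : ℕ) (d c : ℕ → ℤ)
    (hp : IsPalintiple n b k d) (hc : IsCarries n b k d c)
    (nh bh : ℤ) (kh : ℕ) (dh ch : ℕ → ℤ)
    (hph : IsPalintiple nh bh kh dh) (hch : IsCarries nh bh kh dh ch)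
    (hder :
      (kh = k + 1 ∧ ch 0 = 0 ∧ (∀ j, 1 ≤ j → j ≤ k + 1 → ch j = d (j - 1))) ∨
      (kh = k + 2 ∧ ch 0 = 0 ∧ (∀ j, 1 ≤ j → j ≤ k + 1 → ch j = d (j - 1)) ∧
        ch (k + 2) = 0)) :
    (IsSym k c ∧ n + 1 ∣ b →
      C (n - 1) * (X - C b) * palinomial nh kh dh =
        (X - C bh) * (C (d k) * X ^ 2 - X + C (d 0)) * palinomial n k d) ∧
    (IsShiftedSym k c →
      C (c k) * (X - C b) * palinomial nh kh dh =
        (X - C bh) * (C (d k) * X + C (d 0)) * palinomial n k d) := by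
  have hck1 : c (k + 1) = 0 := carry_top n b k d c hp hc
  have hchtop : ch (kh + 1) = 0 := carry_top nh bh kh dh ch hph hch
  obtain ⟨hn1, hnb, hk1, hdig, hdkne, hd0ne, hsum⟩ := hp
  obtain ⟨hc0, hrec⟩ := hc
  obtain ⟨hch0, hrech⟩ := hch
  have hPal : palinomial n k d = (X - C b) * ∑ j ∈ range (k + 1), C (c (j + 1)) * X ^ j := by
    simp only [palinomial]
    exact sumFactor b k c (fun j => d j - n * d (k - j)) hc0 hck1
      (fun j hj => by
        have := hrec j hj
        show d j - n * d (k - j) = c j - b * c (j + 1)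
        linarith)
  have hPalh0 : palinomial nh kh dh
      = (X - C bh) * ∑ j ∈ range (kh + 1), C (ch (j + 1)) * X ^ j := by
    simp only [palinomial]
    exact sumFactor bh kh ch (fun j => dh j - nh * dh (kh - j)) hch0 hchtop
      (fun j hj => by
        have := hrech j hj
        show dh j - nh * dh (kh - j) = ch j - bh * ch (j + 1)
        linarith)
  have hRhD : (∑ j ∈ range (kh + 1), C (ch (j + 1)) * X ^ j)
      = ∑ j ∈ range (k + 1), C (d j) * X ^ j := by
    rcases hder with ⟨hkh, -, hder3⟩ | ⟨hkh, -, hder3, hder4⟩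
    · rw [hkh] at hchtop ⊢
      rw [Finset.sum_range_succ, hchtop]
      simp only [map_zero, zero_mul, add_zero]
      refine Finset.sum_congr rfl fun j hj => ?_
      have hj' := Nat.lt_succ_iff.mp (mem_range.mp hj)
      have h := hder3 (j + 1) (by omega) (by omega)
      simp only [Nat.add_sub_cancel] at h
      rw [h]
    · rw [hkh] at hchtop ⊢
      rw [Finset.sum_range_succ, Finset.sum_range_succ, hchtop, hder4]
      simp only [map_zero, zero_mul, add_zero]
      refine Finset.sum_congr rfl fun j hj => ?_
      have hj' := Nat.lt_succ_iff.mp (mem_range.mp hj)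
      have h := hder3 (j + 1) (by omega) (by omega)
      simp only [Nat.add_sub_cancel] at h
      rw [h]
  have hPalh : palinomial nh kh dh
      = (X - C bh) * ∑ j ∈ range (k + 1), C (d j) * X ^ j := by
    rw [hPalh0, hRhD]
  have hXR : X * (∑ j ∈ range (k + 1), C (c (j + 1)) * X ^ j)
      = ∑ j ∈ range (k + 1), C (c j) * X ^ j :=
    shiftLemma k (fun j => c (j + 1)) c hc0 hck1 (fun j _ => rfl)
  constructor
  · rintro ⟨hsym, m, hm⟩
    have hckz : c k = 0 := by
      have h := hsym 0 (Nat.zero_le k)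
      simp only [Nat.sub_zero] at h
      rw [hc0] at h; exact h.symm
    have hdk : d k = n * d 0 := by
      have h := hrec k le_rfl
      rw [Nat.sub_self, hckz, hck1] at h
      linarith
    have hne : (n + 1 : ℤ) ≠ 0 := by intro h; omega
    have hF : ∀ j ≤ k, (n - 1) * d j
        = m * c (j + 1) - c j + n * m * (if j = 0 then 0 else c (j - 1)) := by
      intro j hj
      by_cases h0 : j = 0
      · subst h0
        have h := hrec 0 (Nat.zero_le k)
        rw [Nat.sub_zero, hc0, hdk, hm] at h
        have hite : (if (0:ℕ) = 0 then (0:ℤ) else c (0 - 1)) = 0 := by norm_num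
        rw [hite, hc0]
        apply mul_left_cancel₀ hne
        linear_combination h
      · have hj1 : 1 ≤ j := Nat.one_le_iff_ne_zero.mpr h0
        have eqA := hrec j hj
        have eqB := hrec (k - j) (Nat.sub_le k j)
        rw [Nat.sub_sub_self hj] at eqB
        have hs1 : c (k - j) = c j := (hsym j hj).symm
        have hs2 : c (k - j + 1) = c (j - 1) := by
          have h := hsym (j - 1) (by omega)
          have he : k - (j - 1) = k - j + 1 := by omega
          rw [he] at h
          exact h.symm
        rw [hs1, hs2] at eqB
        rw [hm] at eqA eqB
        simp only [if_neg h0]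
        apply mul_left_cancel₀ hne
        linear_combination eqA + n * eqB
    have hq1 : 1 ≤ (n - 1).toNat := by omega
    have hqc : ((n - 1).toNat : ℤ) = n - 1 := Int.toNat_of_nonneg (by omega)
    have hsupp : ∀ j, k + 1 ≤ j → (if j ≤ k then c j else 0) = 0 := by
      intro j hj
      rw [if_neg (by omega)]
    have hrelkey : ∀ j, (((n - 1).toNat : ℕ) : ℤ) ∣
        m * (if j + 1 ≤ k then c (j + 1) else 0) - (if j ≤ k then c j else 0) +
          m * (if j = 0 then 0 else (if j - 1 ≤ k then c (j - 1) else 0)) := by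
      intro j
      rw [hqc]
      by_cases hj : j ≤ k
      · have h1 : (if j + 1 ≤ k then c (j + 1) else 0) = c (j + 1) := by
          by_cases hj2 : j + 1 ≤ k
          · rw [if_pos hj2]
          · have hjk : j = k := by omega
            rw [if_neg hj2, hjk, hck1]
        have h2 : (if j ≤ k then c j else 0) = c j := if_pos hj
        have h3 : (if j = 0 then 0 else (if j - 1 ≤ k then c (j - 1) else 0))
            = (if j = 0 then 0 else c (j - 1)) := by
          by_cases h0 : j = 0
          · rw [if_pos h0, if_pos h0]
          · rw [if_neg h0, if_neg h0, if_pos (by omega : j - 1 ≤ k)]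
        rw [h1, h2, h3]
        refine ⟨d j - m * (if j = 0 then 0 else c (j - 1)), ?_⟩
        linear_combination -(hF j hj)
      · by_cases hj2 : j = k + 1
        · subst hj2
          rw [if_neg (by omega), if_neg (by omega), if_neg (by omega),
            if_pos (by omega : k + 1 - 1 ≤ k)]
          have he : k + 1 - 1 = k := by omega
          rw [he, hckz]
          simp
        · rw [if_neg (show ¬ (j + 1 ≤ k) by omega), if_neg (show ¬ (j ≤ k) by omega),
            if_neg (show ¬ (j = 0) by omega), if_neg (show ¬ (j - 1 ≤ k) by omega)]
          simp
    have hallDvd := keyDvd (n - 1).toNat hq1 m (fun j => if j ≤ k then c j else 0) (k + 1)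
      hsupp hrelkey
    have hdvd1 : (n - 1) ∣ c 1 := by
      have h := hallDvd 1
      rw [hqc] at h
      simpa [hk1] using h
    have hF0 : (n - 1) * d 0 = m * c 1 := by
      have h := hF 0 (Nat.zero_le k)
      have hite : (if (0:ℕ) = 0 then (0:ℤ) else c (0 - 1)) = 0 := by norm_num
      rw [hite, hc0] at h
      linarith
    have hd0pos : 1 ≤ d 0 := by
      have := (hdig 0 (Nat.zero_le k)).1
      omega
    have hmpos : 1 ≤ m := by
      by_contra h
      push_neg at h
      have hble : (n + 1) * m ≤ 0 :=
        mul_nonpos_of_nonneg_of_nonpos (by linarith) (by linarith)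
      rw [← hm] at hble
      linarith
    have hc1pos : 0 < c 1 := by
      by_contra h
      push_neg at h
      have h1 : m * c 1 ≤ 0 := mul_nonpos_of_nonneg_of_nonpos (by linarith) h
      have h2 : 0 < (n - 1) * d 0 :=
        mul_pos (by linarith) (by linarith)
      linarith
    have hc1lt : c 1 < n := by
      by_contra h
      push_neg at h
      have heq := hrec 0 (Nat.zero_le k)
      rw [Nat.sub_zero, hc0] at heq
      have hdkb := (hdig k le_rfl).2
      have hbpos : (0:ℤ) < b := by linarith
      have h1 : b * n ≤ b * c 1 := mul_le_mul_of_nonneg_left h (by linarith)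
      nlinarith
    have hc1 : c 1 = n - 1 := by
      have hle : n - 1 ≤ c 1 := Int.le_of_dvd hc1pos hdvd1
      omega
    have hd0m : d 0 = m := by
      have h : (n - 1) * d 0 = (n - 1) * m := by rw [hF0, hc1]; ring
      exact mul_left_cancel₀ (by intro hz; omega : (n - 1 : ℤ) ≠ 0) h
    have hX2R : X ^ 2 * (∑ j ∈ range (k + 1), C (c (j + 1)) * X ^ j)
        = ∑ j ∈ range (k + 1), C (if j = 0 then (0:ℤ) else c (j - 1)) * X ^ j := by
      have hsh := shiftLemma k c (fun j => if j = 0 then (0:ℤ) else c (j - 1))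
        (by simp) (by simp [hckz]) (fun j hj => by simp)
      calc X ^ 2 * (∑ j ∈ range (k + 1), C (c (j + 1)) * X ^ j)
          = X * (X * (∑ j ∈ range (k + 1), C (c (j + 1)) * X ^ j)) := by ring
        _ = X * ∑ j ∈ range (k + 1), C (c j) * X ^ j := by rw [hXR]
        _ = _ := hsh
    have hS : C (n - 1) * (∑ j ∈ range (k + 1), C (d j) * X ^ j)
        = (C (d k) * X ^ 2 - X + C (d 0)) * ∑ j ∈ range (k + 1), C (c (j + 1)) * X ^ j := by
      have hexp : (C (d k) * X ^ 2 - X + C (d 0)) * (∑ j ∈ range (k + 1), C (c (j + 1)) * X ^ j)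
          = C (d k) * (X ^ 2 * (∑ j ∈ range (k + 1), C (c (j + 1)) * X ^ j))
            - X * (∑ j ∈ range (k + 1), C (c (j + 1)) * X ^ j)
            + C (d 0) * (∑ j ∈ range (k + 1), C (c (j + 1)) * X ^ j) := by ring
      rw [hexp, hX2R, hXR, Finset.mul_sum, Finset.mul_sum, Finset.mul_sum,
        ← Finset.sum_sub_distrib, ← Finset.sum_add_distrib]
      refine Finset.sum_congr rfl fun j hj => ?_
      have hj' : j ≤ k := Nat.lt_succ_iff.mp (mem_range.mp hj)
      have hid : (n - 1) * d j
          = d k * (if j = 0 then 0 else c (j - 1)) - c j + d 0 * c (j + 1) := by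
        have h := hF j hj'
        rw [hdk, hd0m]
        linear_combination h
      calc C (n - 1) * (C (d j) * X ^ j) = C ((n - 1) * d j) * X ^ j := by
            rw [map_mul]; ring
        _ = C (d k * (if j = 0 then 0 else c (j - 1)) - c j + d 0 * c (j + 1)) * X ^ j := by
            rw [hid]
        _ = _ := by rw [map_add, map_sub, map_mul, map_mul]; ring
    rw [hPal, hPalh]
    linear_combination ((X - C b) * (X - C bh)) * hS
  · intro hshift
    have hc1k : c 1 = c k := by
      have h := hshift 1 hk1
      have he : k - 1 + 1 = k := by omega
      rw [he] at h
      exact h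
    have hG : ∀ j ≤ k, (n ^ 2 - 1) * d j = (b - n) * c (j + 1) + (n * b - 1) * c j := by
      intro j hj
      have eqA := hrec j hj
      have eqB := hrec (k - j) (Nat.sub_le k j)
      rw [Nat.sub_sub_self hj] at eqB
      have hs1 : c (k - j) = c (j + 1) := by
        have h := hshift (k - j) (Nat.sub_le k j)
        rw [Nat.sub_sub_self hj] at h
        exact h
      have hs2 : c (k - j + 1) = c j := (hshift j hj).symm
      rw [hs1, hs2] at eqB
      linear_combination eqA + n * eqB
    have hG0 : (n ^ 2 - 1) * d 0 = (b - n) * c k := by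
      have h := hG 0 (Nat.zero_le k)
      rw [hc0] at h
      rw [show (0:ℕ) + 1 = 1 from rfl, hc1k] at h
      linarith
    have hGk : (n ^ 2 - 1) * d k = (n * b - 1) * c k := by
      have h := hG k le_rfl
      rw [hck1] at h
      linarith
    have hn2 : (n ^ 2 - 1 : ℤ) ≠ 0 := by nlinarith
    have hid' : ∀ j ≤ k, c k * d j = d k * c j + d 0 * c (j + 1) := by
      intro j hj
      apply mul_left_cancel₀ hn2
      linear_combination c k * hG j hj - c j * hGk - c (j + 1) * hG0
    have hT : C (c k) * (∑ j ∈ range (k + 1), C (d j) * X ^ j)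
        = (C (d k) * X + C (d 0)) * ∑ j ∈ range (k + 1), C (c (j + 1)) * X ^ j := by
      have hexp : (C (d k) * X + C (d 0)) * (∑ j ∈ range (k + 1), C (c (j + 1)) * X ^ j)
          = C (d k) * (X * (∑ j ∈ range (k + 1), C (c (j + 1)) * X ^ j))
            + C (d 0) * (∑ j ∈ range (k + 1), C (c (j + 1)) * X ^ j) := by ring
      rw [hexp, hXR, Finset.mul_sum, Finset.mul_sum, Finset.mul_sum,
        ← Finset.sum_add_distrib]
      refine Finset.sum_congr rfl fun j hj => ?_
      have hj' : j ≤ k := Nat.lt_succ_iff.mp (mem_range.mp hj)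
      calc C (c k) * (C (d j) * X ^ j) = C (c k * d j) * X ^ j := by rw [map_mul]; ring
        _ = C (d k * c j + d 0 * c (j + 1)) * X ^ j := by rw [hid' j hj']
        _ = _ := by rw [map_add, map_mul, map_mul]; ring
    rw [hPal, hPalh]
    linear_combination ((X - C b) * (X - C bh)) * hT
end

section
/- Let p = (d_k, ..., d_0) be an (n,b)-palintiple with palinomial Pal(X), and let p̂ be an (n̂,b̂)-palintiple with palinomial Pal̂(X) that is either singly-ρ-derived from p (p̂ has k+2 digits and its carries satisfy ĉ_0 = 0 and ĉ_j = d_{k−j+1} for 1 ≤ j ≤ k+1) or doubly-ρ-derived from p (p̂ has k+3 digits and its carries satisfy ĉ_0 = 0, ĉ_j = d_{k−j+1} for 1 ≤ j ≤ k+1, and ĉ_{k+2} = 0). If p is a 1089 palintiple (symmetric with n+1 dividing b), then in ℤ[X]: (n−1)·(X−b)·Pal̂(X) = (X−b̂)·(d_0·X² − X + d_k)·Pal(X). If p is shifted-symmetric with carries c_0, ..., c_{k+1}, then in ℤ[X]: c_k·(X−b)·Pal̂(X) = (X−b̂)·(d_0·X + d_k)·Pal(X). -/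
open Finset Polynomial

lemma palint_top_carry {n b : ℤ} {k : ℕ} {d c : ℕ → ℤ}
    (hp : IsPalintiple n b k d) (hc : IsCarries n b k d c) : c (k + 1) = 0 := by
  obtain ⟨hn, hb, hk, hd, hdk, hd0, hsum⟩ := hp
  obtain ⟨hc0, hrec⟩ := hc
  have key : ∑ j ∈ range (k + 1), (n * d (k - j) + c j) * b ^ j
      = ∑ j ∈ range (k + 1), (d j + b * c (j + 1)) * b ^ j := by
    refine sum_congr rfl fun j hj => ?_
    rw [hrec j (Nat.lt_succ_iff.mp (mem_range.mp hj))]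
  have e1 : ∑ j ∈ range (k + 1), (n * d (k - j) + c j) * b ^ j
      = n * (∑ j ∈ range (k + 1), d (k - j) * b ^ j)
        + ∑ j ∈ range (k + 1), c j * b ^ j := by
    rw [Finset.mul_sum, ← Finset.sum_add_distrib]
    exact sum_congr rfl fun j _ => by ring
  have e2 : ∑ j ∈ range (k + 1), (d j + b * c (j + 1)) * b ^ j
      = (∑ j ∈ range (k + 1), d j * b ^ j)
        + ∑ j ∈ range (k + 1), c (j + 1) * b ^ (j + 1) := by
    rw [← Finset.sum_add_distrib]
    exact sum_congr rfl fun j _ => by ring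
  have h1 : ∑ j ∈ range (k + 2), c j * b ^ j
      = (∑ j ∈ range (k + 1), c (j + 1) * b ^ (j + 1)) + c 0 * b ^ 0 :=
    Finset.sum_range_succ' (fun j => c j * b ^ j) (k + 1)
  have h2 : ∑ j ∈ range (k + 2), c j * b ^ j
      = (∑ j ∈ range (k + 1), c j * b ^ j) + c (k + 1) * b ^ (k + 1) :=
    Finset.sum_range_succ (fun j => c j * b ^ j) (k + 1)
  rw [hc0] at h1
  have hz : c (k + 1) * b ^ (k + 1) = 0 := by linarith
  have hbne : b ^ (k + 1) ≠ 0 := pow_ne_zero _ (by linarith)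
  exact (mul_eq_zero.mp hz).resolve_right hbne

lemma palint_carry_bounds {n b : ℤ} {k : ℕ} {d c : ℕ → ℤ}
    (hp : IsPalintiple n b k d) (hc : IsCarries n b k d c) :
    ∀ j ≤ k + 1, 0 ≤ c j ∧ c j ≤ n - 1 := by
  obtain ⟨hn, hb, hk, hd, hdk, hd0, hsum⟩ := hp
  obtain ⟨hc0, hrec⟩ := hc
  intro j
  induction j with
  | zero => intro _; rw [hc0]; constructor <;> linarith
  | succ i ih =>
    intro hik
    have hik' : i ≤ k := by omega
    obtain ⟨hl, hu⟩ := ih (by omega)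
    have hr := hrec i hik'
    obtain ⟨hdl, hdu⟩ := hd i hik'
    obtain ⟨hdl2, hdu2⟩ := hd (k - i) (Nat.sub_le _ _)
    have hbpos : (0:ℤ) < b := by linarith
    have hnd : 0 ≤ n * d (k - i) := mul_nonneg (by linarith) hdl2
    have hnd2 : n * d (k - i) ≤ n * (b - 1) := mul_le_mul_of_nonneg_left hdu2 (by linarith)
    have h1 : 1 - b ≤ b * c (i + 1) := by linarith
    have h2 : b * c (i + 1) ≤ n * b - 1 := by linarith
    constructor
    · by_contra h
      push_neg at h
      have : b * c (i + 1) ≤ b * (-1) := mul_le_mul_of_nonneg_left (by omega) (le_of_lt hbpos)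
      linarith
    · by_contra h
      push_neg at h
      have : b * n ≤ b * c (i + 1) := mul_le_mul_of_nonneg_left (by omega) (le_of_lt hbpos)
      nlinarith

lemma desc_div {n m : ℤ} {k : ℕ} {c : ℕ → ℤ}
    (hn : 1 < n)
    (hcong : ∀ t, 1 ≤ t → t ≤ k → (n - 1) ∣ (m * (c (t - 1) + c (t + 1)) - c t))
    (hc0 : c 0 = 0) (hck : c k = 0) (hck1 : c (k + 1) = 0)
    (hmc1 : (n - 1) ∣ m * c 1) :
    ∀ D : ℕ, (D : ℤ) ∣ (n - 1) → ∀ t ≤ k + 1, (D : ℤ) ∣ c t := by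
  intro D
  induction D using Nat.strong_induction_on with
  | _ D IH =>
    intro hD
    have hn1 : (0:ℤ) < n - 1 := by linarith
    have hD0 : D ≠ 0 := by
      rintro rfl
      rw [Nat.cast_zero, zero_dvd_iff] at hD
      omega
    by_cases h1 : Int.gcd (D : ℤ) m = 1
    · have hco : IsCoprime (D : ℤ) m := Int.isCoprime_iff_gcd_eq_one.mpr h1
      have hDc1 : (D : ℤ) ∣ c 1 := hco.dvd_of_dvd_mul_left (dvd_trans hD hmc1)
      intro t
      induction t using Nat.strong_induction_on with
      | _ t IH2 =>
        intro ht
        match t, ht with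
        | 0, _ => simp [hc0]
        | 1, _ => exact hDc1
        | (s + 2), ht =>
          have hcg := hcong (s + 1) (by omega) (by omega)
          simp only [Nat.add_sub_cancel] at hcg
          have hDe : (D : ℤ) ∣ m * (c s + c (s + 2)) - c (s + 1) := dvd_trans hD hcg
          have hds : (D : ℤ) ∣ c s := IH2 s (by omega) (by omega)
          have hds1 : (D : ℤ) ∣ c (s + 1) := IH2 (s + 1) (by omega) (by omega)
          have hkey : (D : ℤ) ∣ m * c (s + 2) := by
            have heq : m * c (s + 2)
                = (m * (c s + c (s + 2)) - c (s + 1)) - m * c s + c (s + 1) := by ring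
            rw [heq]
            exact dvd_add (dvd_sub hDe (hds.mul_left m)) hds1
          exact hco.dvd_of_dvd_mul_left hkey
    · have hgdvdD : ((Int.gcd (D : ℤ) m : ℕ) : ℤ) ∣ (D : ℤ) := Int.gcd_dvd_left _ _
      have hgdvdm : ((Int.gcd (D : ℤ) m : ℕ) : ℤ) ∣ m := Int.gcd_dvd_right _ _
      set g : ℕ := Int.gcd (D : ℤ) m with hgdef
      have hgD : g ∣ D := Int.natCast_dvd_natCast.mp hgdvdD
      have hg0 : g ≠ 0 := by
        intro h0
        have := Int.gcd_eq_zero_iff.mp h0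
        have : (D:ℤ) = 0 := this.1
        exact hD0 (by exact_mod_cast this)
      have hg2 : 2 ≤ g := by omega
      set D' : ℕ := D / g with hD'def
      have hDD' : g * D' = D := Nat.mul_div_cancel' hgD
      have hD'lt : D' < D := Nat.div_lt_self (Nat.pos_of_ne_zero hD0) (by omega)
      have hD'0 : D' ≠ 0 := by
        intro h0; rw [h0, Nat.mul_zero] at hDD'; exact hD0 hDD'.symm
      have hDN : D = D' * g := by rw [Nat.mul_comm]; exact hDD'.symm
      have hD'dvd : (D' : ℤ) ∣ (n - 1) := by
        refine dvd_trans ?_ hD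
        exact Int.natCast_dvd_natCast.mpr ⟨g, hDN⟩
      have IH' := IH D' hD'lt hD'dvd
      intro t ht
      rcases Nat.eq_zero_or_pos t with rfl | htpos
      · simp [hc0]
      rcases Nat.lt_or_ge t (k + 1) with htk | htk
      · -- 1 ≤ t ≤ k
        have htk' : t ≤ k := by omega
        obtain ⟨a, ha⟩ := IH' (t - 1) (by omega)
        obtain ⟨e, he⟩ := IH' t (by omega)
        obtain ⟨f, hf⟩ := IH' (t + 1) (by omega)
        have hcg := hcong t (by omega) htk'
        have hDe : (D : ℤ) ∣ m * (c (t - 1) + c (t + 1)) - c t := dvd_trans hD hcg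
        rw [ha, he, hf] at hDe
        have hDcast : (D : ℤ) = (D' : ℤ) * (g : ℤ) := by exact_mod_cast hDN
        rw [hDcast] at hDe
        have hfact : m * (↑D' * a + ↑D' * f) - ↑D' * e = (D' : ℤ) * (m * (a + f) - e) := by ring
        rw [hfact] at hDe
        have hD'ne : (D' : ℤ) ≠ 0 := by exact_mod_cast hD'0
        have hgF : (g : ℤ) ∣ (m * (a + f) - e) := (mul_dvd_mul_iff_left hD'ne).mp hDe
        have hge : (g : ℤ) ∣ e := by
          have : e = m * (a + f) - (m * (a + f) - e) := by ring
          rw [this]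
          exact dvd_sub (hgdvdm.mul_right _) hgF
        rw [hDcast, he]
        exact mul_dvd_mul_left _ hge
      · -- t = k+1 or t = k ... t ≥ k+1 and t ≤ k+1 so t = k+1
        have : t = k + 1 := by omega
        rw [this, hck1]
        exact dvd_zero _

lemma sym_facts {n b : ℤ} {k : ℕ} {d c : ℕ → ℤ}
    (hp : IsPalintiple n b k d) (hc : IsCarries n b k d c)
    (hs : IsSym k c) (hdvd : n + 1 ∣ b) :
    (∀ j ≤ k, (n - 1) * d (k - j) + c j = d 0 * c (j - 1) + d k * c (j + 1)) ∧ c k = 0 := by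
  obtain ⟨m, hm⟩ := hdvd
  have hck1 := palint_top_carry hp hc
  have hbnd := palint_carry_bounds hp hc
  obtain ⟨hn, hb, hk, hd, hdkne, hd0ne, hsum⟩ := hp
  obtain ⟨hc0, hrec⟩ := hc
  have hck : c k = 0 := by
    have h := hs k le_rfl
    rwa [Nat.sub_self, hc0] at h
  have hreck := hrec k le_rfl
  rw [Nat.sub_self, hck1, hck] at hreck
  -- n * d 0 + 0 = d k + b * 0
  have hdk : d k = n * d 0 := by linarith
  have hrec0 := hrec 0 (Nat.zero_le k)
  rw [Nat.sub_zero, hc0] at hrec0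
  -- n * d k + 0 = d 0 + b * c 1
  have hbc1 : b * c 1 = (n * n - 1) * d 0 := by
    rw [hdk] at hrec0; linarith
  have hne : (n + 1 : ℤ) ≠ 0 := by linarith
  have hmpos : (0:ℤ) < m := by nlinarith
  have hmc1 : m * c 1 = (n - 1) * d 0 := by
    apply mul_left_cancel₀ hne
    rw [hm] at hbc1
    linarith [hbc1]
  have hstar : ∀ t, 1 ≤ t → t ≤ k →
      (n - 1) * d (k - t) = m * c (t - 1) + n * m * c (t + 1) - c t := by
    intro t h1t htk
    have hr1 := hrec t htk
    have hr2 := hrec (k - t) (Nat.sub_le _ _)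
    rw [Nat.sub_sub_self htk] at hr2
    have hs1 : c t = c (k - t) := hs t htk
    have hs2 : c (k - t + 1) = c (t - 1) := by
      have h := hs (k - t + 1) (by omega)
      rwa [show k - (k - t + 1) = t - 1 by omega] at h
    apply mul_left_cancel₀ hne
    linear_combination n * hr1 + hr2 + hs1 + b * hs2 + (c (t - 1) + n * c (t + 1)) * hm
  have hcong : ∀ t, 1 ≤ t → t ≤ k → (n - 1) ∣ (m * (c (t - 1) + c (t + 1)) - c t) := by
    intro t h1 h2
    exact ⟨d (k - t) - m * c (t + 1), by linear_combination -(hstar t h1 h2)⟩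
  have hdvd1 : (n - 1) ∣ m * c 1 := ⟨d 0, hmc1.symm ▸ rfl⟩
  have hcast : (((n - 1).toNat : ℤ)) = n - 1 := Int.toNat_of_nonneg (by linarith)
  have hfin : (n - 1) ∣ c 1 := by
    have := desc_div hn hcong hc0 hck hck1 hdvd1 (n - 1).toNat (by rw [hcast]) 1 (by omega)
    rwa [hcast] at this
  have hd0pos : (0:ℤ) < d 0 := lt_of_le_of_ne (hd 0 (Nat.zero_le k)).1 (Ne.symm hd0ne)
  have hc1pos : (0:ℤ) < c 1 := by nlinarith
  have hc1le : c 1 ≤ n - 1 := (hbnd 1 (by omega)).2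
  have hc1 : c 1 = n - 1 := le_antisymm hc1le (Int.le_of_dvd hc1pos hfin)
  have hmd0 : m = d 0 := by
    have hne2 : (n - 1 : ℤ) ≠ 0 := by linarith
    apply mul_right_cancel₀ hne2
    rw [hc1] at hmc1; linarith
  have hbd0 : b = (n + 1) * d 0 := by rw [hm, hmd0]
  constructor
  · intro j hj
    rcases Nat.eq_zero_or_pos j with rfl | hjpos
    · show (n - 1) * d (k - 0) + c 0 = d 0 * c (0 - 1) + d k * c 1
      rw [Nat.sub_zero, Nat.zero_sub, hc0, hc1, hdk]
      ring
    · have h := hstar j hjpos hj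
      rw [hmd0] at h
      rw [hdk]
      linarith [h]
  · exact hck

lemma shifted_facts {n b : ℤ} {k : ℕ} {d c : ℕ → ℤ}
    (hp : IsPalintiple n b k d) (hc : IsCarries n b k d c) (hss : IsShiftedSym k c) :
    ∀ j ≤ k, d 0 * c j + d k * c (j + 1) = c k * d (k - j) := by
  have hck1 := palint_top_carry hp hc
  obtain ⟨hn, hb, hk, hd, hdkne, hd0ne, hsum⟩ := hp
  obtain ⟨hc0, hrec⟩ := hc
  have hckc1 : c k = c 1 := by
    have h := hss k le_rfl
    rwa [Nat.sub_self] at h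
  have hreck := hrec k le_rfl
  rw [Nat.sub_self, hck1] at hreck
  -- n * d 0 + c k = d k + b * 0
  have hA : d k = n * d 0 + c k := by linarith
  have hrec0 := hrec 0 (Nat.zero_le k)
  rw [Nat.sub_zero, hc0] at hrec0
  -- n * d k + 0 = d 0 + b * c 1
  have hB : n * d k = d 0 + b * c k := by rw [hckc1]; linarith
  have h1 : (n * n - 1) * d 0 = (b - n) * c k := by linear_combination hB - n * hA
  have h2 : (n * n - 1) * d k = (n * b - 1) * c k := by
    linear_combination (n * n - 1) * hA + n * h1
  intro j hj
  have hsymA : c (k - j) = c (j + 1) := by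
    have h := hss (k - j) (Nat.sub_le _ _)
    rwa [Nat.sub_sub_self hj] at h
  have hsymB : c (k - j + 1) = c j := by
    rcases Nat.eq_zero_or_pos j with rfl | hjpos
    · rw [Nat.sub_zero, hck1, hc0]
    · have h := hss (k - j + 1) (by omega)
      rwa [show k - (k - j + 1) + 1 = j by omega] at h
  have hr1 := hrec j hj
  have hr2 := hrec (k - j) (Nat.sub_le _ _)
  rw [Nat.sub_sub_self hj] at hr2
  have h3 : (n * n - 1) * d (k - j) = (b - n) * c j + (n * b - 1) * c (j + 1) := by
    linear_combination n * hr1 + hr2 - hsymA + b * hsymB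
  have hne : (n * n - 1 : ℤ) ≠ 0 := by nlinarith
  apply mul_left_cancel₀ hne
  linear_combination c j * h1 + c (j + 1) * h2 - c k * h3

lemma sum_shift_up (f : ℕ → ℤ) (K : ℕ) (h0 : f 0 = 0) (hK : f (K + 1) = 0) :
    ∑ j ∈ range (K + 1), C (f (j + 1)) * X ^ (j + 1)
      = ∑ j ∈ range (K + 1), C (f j) * X ^ j := by
  have h1 : ∑ j ∈ range (K + 2), C (f j) * X ^ j
      = (∑ j ∈ range (K + 1), C (f (j + 1)) * X ^ (j + 1)) + C (f 0) * X ^ 0 :=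
    Finset.sum_range_succ' (fun j => C (f j) * X ^ j) (K + 1)
  have h2 : ∑ j ∈ range (K + 2), C (f j) * X ^ j
      = (∑ j ∈ range (K + 1), C (f j) * X ^ j) + C (f (K + 1)) * X ^ (K + 1) :=
    Finset.sum_range_succ (fun j => C (f j) * X ^ j) (K + 1)
  rw [h0, map_zero, zero_mul, add_zero] at h1
  rw [hK, map_zero, zero_mul, add_zero] at h2
  exact h1.symm.trans h2

lemma sum_shift_down (f : ℕ → ℤ) (K : ℕ) (h0 : f 0 = 0) (hK : f K = 0) :
    ∑ j ∈ range (K + 1), C (f j) * X ^ (j + 2)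
      = ∑ j ∈ range (K + 1), C (f (j - 1)) * X ^ (j + 1) := by
  have h1 : ∑ j ∈ range (K + 1), C (f (j - 1)) * X ^ (j + 1)
      = (∑ j ∈ range K, C (f j) * X ^ (j + 2)) + C (f 0) * X ^ 1 := by
    have h := Finset.sum_range_succ' (fun j => C (f (j - 1)) * X ^ (j + 1)) K
    simpa using h
  have h2 : ∑ j ∈ range (K + 1), C (f j) * X ^ (j + 2)
      = (∑ j ∈ range K, C (f j) * X ^ (j + 2)) + C (f K) * X ^ (K + 2) :=
    Finset.sum_range_succ (fun j => C (f j) * X ^ (j + 2)) K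
  rw [h0, map_zero, zero_mul, add_zero] at h1
  rw [hK, map_zero, zero_mul, add_zero] at h2
  exact h2.trans h1.symm

lemma pal_eq_carry {n b : ℤ} {k : ℕ} {d c : ℕ → ℤ}
    (hp : IsPalintiple n b k d) (hc : IsCarries n b k d c) :
    X * palinomial n k d = (X - C b) * ∑ j ∈ range (k + 1), C (c j) * X ^ j := by
  have htop := palint_top_carry hp hc
  obtain ⟨hn, hb, hk, hd, hdkne, hd0ne, hsum⟩ := hp
  obtain ⟨hc0, hrec⟩ := hc
  have hpal : palinomial n k d
      = (∑ j ∈ range (k + 1), C (c j) * X ^ j)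
        - C b * ∑ j ∈ range (k + 1), C (c (j + 1)) * X ^ j := by
    unfold palinomial
    rw [Finset.mul_sum, ← Finset.sum_sub_distrib]
    refine sum_congr rfl fun j hj => ?_
    have hj' : j ≤ k := Nat.lt_succ_iff.mp (mem_range.mp hj)
    have hcoef : d j - n * d (k - j) = c j - b * c (j + 1) := by
      have h := hrec j hj'; linarith
    rw [hcoef, map_sub, map_mul]
    ring
  have hx : X * ∑ j ∈ range (k + 1), C (c (j + 1)) * X ^ j
      = ∑ j ∈ range (k + 1), C (c j) * X ^ j := by
    rw [Finset.mul_sum]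
    rw [show ∑ j ∈ range (k + 1), X * (C (c (j + 1)) * X ^ j)
        = ∑ j ∈ range (k + 1), C (c (j + 1)) * X ^ (j + 1) from
      sum_congr rfl fun j _ => by ring]
    exact sum_shift_up c k hc0 htop
  rw [hpal, mul_sub, show X * (C b * ∑ j ∈ range (k + 1), C (c (j + 1)) * X ^ j)
      = C b * (X * ∑ j ∈ range (k + 1), C (c (j + 1)) * X ^ j) from by ring, hx]
  ring

lemma phat_eq {k : ℕ} {d : ℕ → ℤ} {nh bh : ℤ} {kh : ℕ} {dh ch : ℕ → ℤ}
    (hph : IsPalintiple nh bh kh dh) (hch : IsCarries nh bh kh dh ch)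
    (hder :
      (kh = k + 1 ∧ ch 0 = 0 ∧ (∀ j, 1 ≤ j → j ≤ k + 1 → ch j = d (k + 1 - j))) ∨
      (kh = k + 2 ∧ ch 0 = 0 ∧ (∀ j, 1 ≤ j → j ≤ k + 1 → ch j = d (k + 1 - j)) ∧
        ch (k + 2) = 0)) :
    palinomial nh kh dh = (X - C bh) * revDigitPoly k d := by
  have hXpal := pal_eq_carry hph hch
  have hXR : X * revDigitPoly k d = ∑ j ∈ range (k + 1), C (d (k - j)) * X ^ (j + 1) := by
    rw [revDigitPoly, Finset.mul_sum]
    exact sum_congr rfl fun j _ => by ring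
  have hQ : ∑ j ∈ range (kh + 1), C (ch j) * X ^ j = X * revDigitPoly k d := by
    rcases hder with ⟨hkh, h0, hval⟩ | ⟨hkh, h0, hval, hend⟩
    · subst hkh
      have hsplit : ∑ j ∈ range (k + 2), C (ch j) * X ^ j
          = (∑ j ∈ range (k + 1), C (ch (j + 1)) * X ^ (j + 1)) + C (ch 0) * X ^ 0 :=
        Finset.sum_range_succ' (fun j => C (ch j) * X ^ j) (k + 1)
      rw [hsplit, h0, map_zero, zero_mul, add_zero, hXR]
      refine sum_congr rfl fun j hj => ?_
      have hj' : j ≤ k := Nat.lt_succ_iff.mp (mem_range.mp hj)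
      rw [hval (j + 1) (by omega) (by omega), show k + 1 - (j + 1) = k - j from by omega]
    · subst hkh
      have htopsplit : ∑ j ∈ range (k + 3), C (ch j) * X ^ j
          = (∑ j ∈ range (k + 2), C (ch j) * X ^ j) + C (ch (k + 2)) * X ^ (k + 2) :=
        Finset.sum_range_succ (fun j => C (ch j) * X ^ j) (k + 2)
      rw [htopsplit, hend, map_zero, zero_mul, add_zero]
      have hsplit : ∑ j ∈ range (k + 2), C (ch j) * X ^ j
          = (∑ j ∈ range (k + 1), C (ch (j + 1)) * X ^ (j + 1)) + C (ch 0) * X ^ 0 :=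
        Finset.sum_range_succ' (fun j => C (ch j) * X ^ j) (k + 1)
      rw [hsplit, h0, map_zero, zero_mul, add_zero, hXR]
      refine sum_congr rfl fun j hj => ?_
      have hj' : j ≤ k := Nat.lt_succ_iff.mp (mem_range.mp hj)
      rw [hval (j + 1) (by omega) (by omega), show k + 1 - (j + 1) = k - j from by omega]
  rw [hQ] at hXpal
  apply mul_left_cancel₀ (X_ne_zero : (X : Polynomial ℤ) ≠ 0)
  rw [hXpal]
  ring

lemma key_sym {n : ℤ} {k : ℕ} {d c : ℕ → ℤ}
    (hc0 : c 0 = 0) (hck : c k = 0) (hck1 : c (k + 1) = 0)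
    (hE : ∀ j ≤ k, (n - 1) * d (k - j) + c j = d 0 * c (j - 1) + d k * c (j + 1)) :
    C (n - 1) * (X * revDigitPoly k d)
      = (C (d 0) * X ^ 2 - X + C (d k)) * ∑ j ∈ range (k + 1), C (c j) * X ^ j := by
  have hS3 := sum_shift_up c k hc0 hck1
  have hS1 := sum_shift_down c k hc0 hck
  have hlhs : C (n - 1) * (X * revDigitPoly k d)
      = ∑ j ∈ range (k + 1), C ((n - 1) * d (k - j)) * X ^ (j + 1) := by
    rw [revDigitPoly, Finset.mul_sum, Finset.mul_sum]
    refine sum_congr rfl fun j _ => ?_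
    rw [map_mul]; ring
  have ha : X ^ 2 * (∑ j ∈ range (k + 1), C (c j) * X ^ j)
      = ∑ j ∈ range (k + 1), C (c j) * X ^ (j + 2) := by
    rw [Finset.mul_sum]; exact sum_congr rfl fun j _ => by ring
  have hbb : X * (∑ j ∈ range (k + 1), C (c j) * X ^ j)
      = ∑ j ∈ range (k + 1), C (c j) * X ^ (j + 1) := by
    rw [Finset.mul_sum]; exact sum_congr rfl fun j _ => by ring
  have hrhs : (C (d 0) * X ^ 2 - X + C (d k)) * (∑ j ∈ range (k + 1), C (c j) * X ^ j)
      = ∑ j ∈ range (k + 1), C (d 0 * c (j - 1) - c j + d k * c (j + 1)) * X ^ (j + 1) := by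
    calc (C (d 0) * X ^ 2 - X + C (d k)) * (∑ j ∈ range (k + 1), C (c j) * X ^ j)
        = C (d 0) * (X ^ 2 * (∑ j ∈ range (k + 1), C (c j) * X ^ j))
            - X * (∑ j ∈ range (k + 1), C (c j) * X ^ j)
            + C (d k) * (∑ j ∈ range (k + 1), C (c j) * X ^ j) := by ring
      _ = C (d 0) * (∑ j ∈ range (k + 1), C (c (j - 1)) * X ^ (j + 1))
            - (∑ j ∈ range (k + 1), C (c j) * X ^ (j + 1))
            + C (d k) * (∑ j ∈ range (k + 1), C (c (j + 1)) * X ^ (j + 1)) := by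
          rw [ha, hS1, hbb, ← hS3]
      _ = ∑ j ∈ range (k + 1), C (d 0 * c (j - 1) - c j + d k * c (j + 1)) * X ^ (j + 1) := by
          rw [Finset.mul_sum, Finset.mul_sum, ← Finset.sum_sub_distrib,
            ← Finset.sum_add_distrib]
          refine sum_congr rfl fun j _ => ?_
          rw [map_add, map_sub, map_mul, map_mul]
          ring
  rw [hlhs, hrhs]
  refine sum_congr rfl fun j hj => ?_
  have hj' : j ≤ k := Nat.lt_succ_iff.mp (mem_range.mp hj)
  have h : (n - 1) * d (k - j) = d 0 * c (j - 1) - c j + d k * c (j + 1) := by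
    linarith [hE j hj']
  rw [h]

lemma key_shift {k : ℕ} {d c : ℕ → ℤ}
    (hc0 : c 0 = 0) (hck1 : c (k + 1) = 0)
    (hF : ∀ j ≤ k, d 0 * c j + d k * c (j + 1) = c k * d (k - j)) :
    C (c k) * (X * revDigitPoly k d)
      = (C (d 0) * X + C (d k)) * ∑ j ∈ range (k + 1), C (c j) * X ^ j := by
  have hS3 := sum_shift_up c k hc0 hck1
  have hlhs : C (c k) * (X * revDigitPoly k d)
      = ∑ j ∈ range (k + 1), C (c k * d (k - j)) * X ^ (j + 1) := by
    rw [revDigitPoly, Finset.mul_sum, Finset.mul_sum]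
    refine sum_congr rfl fun j _ => ?_
    rw [map_mul]; ring
  have hbb : X * (∑ j ∈ range (k + 1), C (c j) * X ^ j)
      = ∑ j ∈ range (k + 1), C (c j) * X ^ (j + 1) := by
    rw [Finset.mul_sum]; exact sum_congr rfl fun j _ => by ring
  have hrhs : (C (d 0) * X + C (d k)) * (∑ j ∈ range (k + 1), C (c j) * X ^ j)
      = ∑ j ∈ range (k + 1), C (d 0 * c j + d k * c (j + 1)) * X ^ (j + 1) := by
    calc (C (d 0) * X + C (d k)) * (∑ j ∈ range (k + 1), C (c j) * X ^ j)
        = C (d 0) * (X * (∑ j ∈ range (k + 1), C (c j) * X ^ j))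
            + C (d k) * (∑ j ∈ range (k + 1), C (c j) * X ^ j) := by ring
      _ = C (d 0) * (∑ j ∈ range (k + 1), C (c j) * X ^ (j + 1))
            + C (d k) * (∑ j ∈ range (k + 1), C (c (j + 1)) * X ^ (j + 1)) := by
          rw [hbb, ← hS3]
      _ = ∑ j ∈ range (k + 1), C (d 0 * c j + d k * c (j + 1)) * X ^ (j + 1) := by
          rw [Finset.mul_sum, Finset.mul_sum, ← Finset.sum_add_distrib]
          refine sum_congr rfl fun j _ => ?_
          rw [map_add, map_mul, map_mul]
          ring
  rw [hlhs, hrhs]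
  refine sum_congr rfl fun j hj => ?_
  have hj' : j ≤ k := Nat.lt_succ_iff.mp (mem_range.mp hj)
  rw [hF j hj']

/-- **Corollary.** The palinomial of a singly-ρ- or doubly-ρ-derived palintiple `p̂`
(carry sequence `(d 0, ..., d k, 0)` resp. `(0, d 0, ..., d k, 0)`) factors through
the palinomial of the original palintiple `p`. -/
theorem rho_derived_palinomial_factorization (n b : ℤ) (k : ℕ) (d c : ℕ → ℤ)
    (hp : IsPalintiple n b k d) (hc : IsCarries n b k d c)
    (nh bh : ℤ) (kh : ℕ) (dh ch : ℕ → ℤ)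
    (hph : IsPalintiple nh bh kh dh) (hch : IsCarries nh bh kh dh ch)
    (hder :
      (kh = k + 1 ∧ ch 0 = 0 ∧ (∀ j, 1 ≤ j → j ≤ k + 1 → ch j = d (k + 1 - j))) ∨
      (kh = k + 2 ∧ ch 0 = 0 ∧ (∀ j, 1 ≤ j → j ≤ k + 1 → ch j = d (k + 1 - j)) ∧
        ch (k + 2) = 0)) :
    (IsSym k c ∧ n + 1 ∣ b →
      C (n - 1) * (X - C b) * palinomial nh kh dh =
        (X - C bh) * (C (d 0) * X ^ 2 - X + C (d k)) * palinomial n k d) ∧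
    (IsShiftedSym k c →
      C (c k) * (X - C b) * palinomial nh kh dh =
        (X - C bh) * (C (d 0) * X + C (d k)) * palinomial n k d) := by
  have hphat := phat_eq hph hch hder
  have hXpal := pal_eq_carry hp hc
  have htop := palint_top_carry hp hc
  have hc0 := hc.1
  constructor
  · rintro ⟨hsym, hdvd⟩
    obtain ⟨hE, hck⟩ := sym_facts hp hc hsym hdvd
    have key1 := key_sym hc0 hck htop hE
    rw [hphat]
    apply mul_left_cancel₀ (X_ne_zero : (X : Polynomial ℤ) ≠ 0)
    linear_combination ((X - C b) * (X - C bh)) * key1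
      - ((X - C bh) * (C (d 0) * X ^ 2 - X + C (d k))) * hXpal
  · intro hss
    have hF := shifted_facts hp hc hss
    have key2 := key_shift hc0 htop hF
    rw [hphat]
    apply mul_left_cancel₀ (X_ne_zero : (X : Polynomial ℤ) ≠ 0)
    linear_combination ((X - C b) * (X - C bh)) * key2
      - ((X - C bh) * (C (d 0) * X + C (d k))) * hXpal
end

section
/- Let p = (d_k, ..., d_0) be a 1089 (n,b)-palintiple (a symmetric (n,b)-palintiple with n+1 dividing b), and let p̂ be a (k+2)-digit (n̂,b̂)-palintiple whose carries satisfy either ĉ_0 = 0 and ĉ_j = d_{j−1} for 1 ≤ j ≤ k+1 (a Hoey palintiple, singly-derived from p), or ĉ_0 = 0 and ĉ_j = d_{k−j+1} for 1 ≤ j ≤ k+1 (a ρ-Hoey palintiple, singly-ρ-derived from p). Then the palinomial Pal̂(X) of p̂ has at least one root on the complex unit circle: there exists z ∈ ℂ with |z| = 1 and Pal̂(z) = 0. -/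
open Finset Polynomial

lemma carries_top_zero {n b : ℤ} {k : ℕ} {d c : ℕ → ℤ}
    (hp : IsPalintiple n b k d) (hc : IsCarries n b k d c) : c (k+1) = 0 := by
  obtain ⟨hn, hnb, hk, hd, hdk, hd0, heq⟩ := hp
  obtain ⟨hc0, hrec⟩ := hc
  have hb : (0:ℤ) < b := by linarith
  have key : ∑ j ∈ range (k+1), c j * b^j = ∑ j ∈ range (k+1), c (j+1) * b^(j+1) := by
    have hsum : ∑ j ∈ range (k+1), (n * d (k-j) + c j) * b^j
              = ∑ j ∈ range (k+1), (d j + b * c (j+1)) * b^j :=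
      Finset.sum_congr rfl fun j hj => by
        rw [hrec j (Nat.lt_succ_iff.mp (Finset.mem_range.mp hj))]
    have l1 : ∑ j ∈ range (k+1), (n * d (k-j) + c j) * b^j
        = n * (∑ j ∈ range (k+1), d (k-j) * b^j) + ∑ j ∈ range (k+1), c j * b^j := by
      rw [Finset.mul_sum, ← Finset.sum_add_distrib]
      exact Finset.sum_congr rfl fun j _ => by ring
    have l2 : ∑ j ∈ range (k+1), (d j + b * c (j+1)) * b^j
        = (∑ j ∈ range (k+1), d j * b^j) + ∑ j ∈ range (k+1), c (j+1) * b^(j+1) := by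
      rw [← Finset.sum_add_distrib]
      exact Finset.sum_congr rfl fun j _ => by ring
    rw [l1, l2, ← heq] at hsum
    linarith [hsum]
  have e3 : ∑ j ∈ range (k+2), c j * b^j = (∑ j ∈ range (k+1), c (j+1) * b^(j+1)) + c 0 * b^0 :=
    Finset.sum_range_succ' (fun j => c j * b^j) (k+1)
  have e4 : ∑ j ∈ range (k+2), c j * b^j = (∑ j ∈ range (k+1), c j * b^j) + c (k+1) * b^(k+1) :=
    Finset.sum_range_succ (fun j => c j * b^j) (k+1)
  have hz : c (k+1) * b^(k+1) = 0 := by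
    rw [e4, key, hc0] at e3; linarith
  rcases mul_eq_zero.mp hz with h | h
  · exact h
  · exact absurd h (pow_ne_zero _ (ne_of_gt hb))

lemma carries_bounds {n b : ℤ} {k : ℕ} {d c : ℕ → ℤ}
    (hp : IsPalintiple n b k d) (hc : IsCarries n b k d c) :
    ∀ j ≤ k+1, 0 ≤ c j ∧ c j ≤ n - 1 := by
  obtain ⟨hn, hnb, hk, hd, hdk, hd0, heq⟩ := hp
  obtain ⟨hc0, hrec⟩ := hc
  have hb : (0:ℤ) < b := by linarith
  intro j
  induction j with
  | zero => intro _; rw [hc0]; constructor <;> linarith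
  | succ i ih =>
    intro hik
    have hi : i ≤ k := by omega
    have hrec' := hrec i hi
    have hdi := hd i hi
    have hdki := hd (k - i) (Nat.sub_le k i)
    have hci := ih (by omega)
    constructor
    · by_contra hneg
      push_neg at hneg
      have h1 : c (i+1) ≤ -1 := by omega
      have : b * c (i+1) ≤ b * (-1) := by
        exact mul_le_mul_of_nonneg_left h1 hb.le
      nlinarith [hci.1, hdi.1, hdi.2, hdki.1, hdki.2]
    · by_contra hneg
      push_neg at hneg
      have h1 : n ≤ c (i+1) := by omega
      have : b * n ≤ b * c (i+1) := mul_le_mul_of_nonneg_left h1 hb.le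
      nlinarith [hci.2, hdi.1, hdi.2, hdki.1, hdki.2]

lemma dvd_pow_self_of_dvd_pow {b N : ℕ} : ∀ a, 1 ≤ a → a ∣ b^N → a ∣ b^a := by
  intro a
  induction a using Nat.strong_induction_on with
  | _ a IH =>
    intro ha hdvd
    rcases eq_or_lt_of_le ha with h1 | h2
    · rw [← h1]; exact one_dvd _
    · set g := Nat.gcd a b with hg
      have hga : g ∣ a := Nat.gcd_dvd_left a b
      have hgb : g ∣ b := Nat.gcd_dvd_right a b
      by_cases hg1 : g = 1
      · have hcop : Nat.Coprime a b := hg1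
        have : a = 1 := Nat.Coprime.eq_one_of_dvd (hcop.pow_right N) hdvd
        omega
      · have hgpos : 2 ≤ g := by
          rcases Nat.eq_zero_or_pos g with h0 | hpos
          · exfalso; have := Nat.eq_zero_of_gcd_eq_zero_left h0; omega
          · omega
        set a' := a / g with ha'
        have haa : g * a' = a := Nat.mul_div_cancel' hga
        have ha'pos : 1 ≤ a' := by
          rcases Nat.eq_zero_or_pos a' with h0 | hpos
          · exfalso; rw [h0, mul_zero] at haa; omega
          · exact hpos
        have ha'lt : a' < a := Nat.div_lt_self (by omega) (by omega)
        have ha'dvd : a' ∣ b^N := dvd_trans ⟨g, by rw [mul_comm]; exact haa.symm⟩ hdvd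
        have hIH : a' ∣ b^a' := IH a' ha'lt ha'pos ha'dvd
        have : g * a' ∣ b * b^a' := mul_dvd_mul hgb hIH
        rw [haa] at this
        have hle : a' + 1 ≤ a := by nlinarith
        calc a ∣ b * b^a' := this
          _ = b^(a'+1) := by rw [pow_succ]; ring
          _ ∣ b^a := pow_dvd_pow b hle

lemma c_one_eq {n b q : ℤ} {k : ℕ} {d c : ℕ → ℤ}
    (hp : IsPalintiple n b k d) (hc : IsCarries n b k d c)
    (hsym : IsSym k c) (hq : b = (n+1) * q) : c 1 = n - 1 := by
  obtain ⟨hn, hnb, hk, hd, hdk, hd0, heq⟩ := hp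
  obtain ⟨hc0, hrec⟩ := hc
  have hb : (0:ℤ) < b := by linarith
  have htop : c (k+1) = 0 := carries_top_zero ⟨hn, hnb, hk, hd, hdk, hd0, heq⟩ ⟨hc0, hrec⟩
  have hbnd : ∀ j ≤ k+1, 0 ≤ c j ∧ c j ≤ n - 1 :=
    carries_bounds ⟨hn, hnb, hk, hd, hdk, hd0, heq⟩ ⟨hc0, hrec⟩
  have hck : c k = 0 := by rw [hsym k le_rfl, Nat.sub_self, hc0]
  have hqpos : 0 < q := by nlinarith
  -- the master relation
  have hR : ∀ j, 1 ≤ j → j ≤ k → c j + (n-1) * d j = q * c (j+1) + n * q * c (j-1) := by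
    intro j h1 h2
    have e1 := hrec j h2
    have e2 := hrec (k - j) (Nat.sub_le _ _)
    rw [Nat.sub_sub_self h2] at e2
    have hs1 : c (k - j) = c j := (hsym j h2).symm
    have hs2 : c (k - j + 1) = c (j-1) := by
      have h3 : j - 1 ≤ k := by omega
      have h5 := hsym (j-1) h3
      have h4 : k - (j - 1) = k - j + 1 := by omega
      rw [h4] at h5; exact h5.symm
    rw [hs1, hs2] at e2
    have hmul : (n+1) * (c j + (n-1) * d j) = (n+1) * (q * c (j+1) + n * q * c (j-1)) := by
      linear_combination e1 + n * e2 + (c (j+1) + n * c (j-1)) * hq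
    exact mul_left_cancel₀ (by positivity : (n+1) ≠ 0) hmul
  -- c 1 relation and positivity
  have hR0 : q * c 1 = (n-1) * d 0 := by
    have e1 := hrec 0 (Nat.zero_le k)
    have ek := hrec k le_rfl
    rw [Nat.sub_zero, hc0] at e1
    rw [Nat.sub_self, hck, htop] at ek
    have hmul : (n+1) * (q * c 1) = (n+1) * ((n-1) * d 0) := by
      linear_combination (-1 : ℤ) * e1 - n * ek - c 1 * hq
    exact mul_left_cancel₀ (by positivity : (n+1) ≠ 0) hmul
  have hd0pos : 0 < d 0 := lt_of_le_of_ne (hd 0 (Nat.zero_le k)).1 (Ne.symm hd0)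
  have hc1pos : 0 < c 1 := by nlinarith
  -- downward induction: (n-1) ∣ q^i * c (k+1-i)
  have hQ : ∀ i, i ≤ k+1 → (n-1) ∣ q^i * c (k+1-i) := by
    intro i
    induction i using Nat.strong_induction_on with
    | _ i IH =>
      intro hik
      match i, hik with
      | 0, _ => rw [Nat.sub_zero, htop]; simp
      | 1, _ => rw [show k+1-1 = k from rfl, hck]; simp
      | (i+2), hik =>
        have hjdef : k+1-(i+2) + 1 ≤ k := by omega
        set j := k+1-(i+2) with hj
        have hidx1 : k+1-(i+1) = j+1 := by omega
        have hidx0 : k+1-i = j+2 := by omega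
        have hr : c (j+1) + (n-1) * d (j+1) = q * c (j+2) + n * q * c j := by
          have h5 := hR (j+1) (by omega) (by omega)
          rw [Nat.add_sub_cancel, show j+1+1 = j+2 by omega] at h5
          exact h5
        have h1 : (n-1) ∣ q^(i+1) * c (j+1) := by
          have := IH (i+1) (by omega) (by omega); rwa [hidx1] at this
        have h2 : (n-1) ∣ q^i * c (j+2) := by
          have := IH i (by omega) (by omega); rwa [hidx0] at this
        have h3 : (n-1) ∣ n * (q^(i+2) * c j) := by
          have hkey : n * (q^(i+2) * c j) =
              q^(i+1) * c (j+1) + (n-1) * (q^(i+1) * d (j+1)) - q^2 * (q^i * c (j+2)) := by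
            linear_combination (-(q^(i+1))) * hr
          rw [hkey]
          exact dvd_sub (dvd_add h1 (dvd_mul_right _ _)) (h2.mul_left _)
        have h4 : q^(i+2) * c j = n * (q^(i+2) * c j) - (n-1) * (q^(i+2) * c j) := by ring
        rw [h4]
        exact dvd_sub h3 (dvd_mul_right _ _)
  have hQk : (n-1) ∣ q^k * c 1 := by
    have := hQ k (by omega)
    rwa [show k+1-k = 1 by omega] at this
  -- move to ℕ
  set mn := (n-1).toNat with hmn
  set qn := q.toNat with hqn
  have hmZ : ((mn : ℤ)) = n - 1 := Int.toNat_of_nonneg (by linarith)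
  have hqZ : ((qn : ℤ)) = q := Int.toNat_of_nonneg (by linarith)
  have hmpos : 1 ≤ mn := by
    have : (1:ℤ) ≤ (mn:ℤ) := by rw [hmZ]; linarith
    exact_mod_cast this
  set e : ℕ → ℕ := fun j => (c j).toNat with he
  set f : ℕ → ℕ := fun j => (d j).toNat with hf
  have heZ : ∀ j, j ≤ k+1 → ((e j : ℤ)) = c j := fun j hj => Int.toNat_of_nonneg (hbnd j hj).1
  have hfZ : ∀ j, j ≤ k → ((f j : ℤ)) = d j := fun j hj => Int.toNat_of_nonneg (hd j hj).1
  have he0 : e 0 = 0 := by simp [he, hc0]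
  have hek : e k = 0 := by simp [he, hck]
  have hek1 : e (k+1) = 0 := by simp [he, htop]
  have hNat1 : mn ∣ qn^k * e 1 := by
    have hcast : ((qn^k * e 1 : ℕ) : ℤ) = q^k * c 1 := by
      push_cast
      rw [hqZ, heZ 1 (by omega)]
    have hZ : ((mn:ℤ)) ∣ ((qn^k * e 1 : ℕ) : ℤ) := by rw [hcast, hmZ]; exact hQk
    exact_mod_cast hZ
  have hRn : ∀ j, 1 ≤ j → j ≤ k → e j + mn * f j = qn * e (j+1) + (mn+1) * qn * e (j-1) := by
    intro j h1 h2
    have hz := hR j h1 h2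
    have hZ : ((e j + mn * f j : ℕ) : ℤ) = ((qn * e (j+1) + (mn+1) * qn * e (j-1) : ℕ) : ℤ) := by
      push_cast
      rw [hmZ, hqZ, heZ j (by omega), heZ (j+1) (by omega), heZ (j-1) (by omega), hfZ j h2]
      linarith [hz]
    exact_mod_cast hZ
  have hlift : ∀ i, ∀ j, j ≤ k+1 → Nat.gcd mn (qn^i) ∣ e j := by
    intro i
    induction i with
    | zero => intro j hj; simp
    | succ i IH =>
      intro j hj
      have hgm : Nat.gcd mn (qn^(i+1)) ∣ mn := Nat.gcd_dvd_left _ _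
      rcases Nat.eq_zero_or_pos j with rfl | hj1
      · rw [he0]; exact dvd_zero _
      rcases Nat.lt_or_ge j k with hjk | hjk
      · have hstep : Nat.gcd mn (qn^(i+1)) ∣ qn * Nat.gcd mn (qn^i) := by
          rw [← Nat.gcd_mul_left]
          refine Nat.dvd_gcd (hgm.trans (dvd_mul_left mn qn)) ?_
          have hpow : qn * qn^i = qn^(i+1) := by ring
          rw [hpow]
          exact Nat.gcd_dvd_right _ _
        have hd1 : Nat.gcd mn (qn^(i+1)) ∣ qn * e (j+1) :=
          hstep.trans (mul_dvd_mul_left qn (IH (j+1) (by omega)))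
        have hd2 : Nat.gcd mn (qn^(i+1)) ∣ (mn+1) * (qn * e (j-1)) :=
          ((hstep.trans (mul_dvd_mul_left qn (IH (j-1) (by omega))))).mul_left (mn+1)
        have hsum : Nat.gcd mn (qn^(i+1)) ∣ e j + mn * f j := by
          rw [hRn j (by omega) (by omega)]
          refine dvd_add hd1 ?_
          rwa [mul_assoc]
        have hfin := Nat.dvd_sub hsum (hgm.mul_right (f j))
        rwa [Nat.add_sub_cancel] at hfin
      · have hcase : j = k ∨ j = k+1 := by omega
        rcases hcase with rfl | rfl
        · rw [hek]; exact dvd_zero _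
        · rw [hek1]; exact dvd_zero _
  have hg1 : Nat.gcd mn (qn^mn) ∣ e 1 := hlift mn 1 (by omega)
  set g := Nat.gcd mn (qn^mn) with hgdef
  have hgm : g ∣ mn := Nat.gcd_dvd_left _ _
  have hgq : g ∣ qn^mn := Nat.gcd_dvd_right _ _
  set u := mn / g with hu
  have hgu : g * u = mn := Nat.mul_div_cancel' hgm
  have hcop : Nat.Coprime u qn := by
    by_contra hnc
    obtain ⟨p, hp, hpu, hpq⟩ := Nat.Prime.not_coprime_iff_dvd.mp hnc
    have hgpm : g * p ∣ mn := by
      obtain ⟨t, ht⟩ := hpu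
      exact ⟨t, by rw [← hgu, ht]; ring⟩
    have hgpq : g * p ∣ qn^(mn+1) := by
      have hpow : qn^(mn+1) = qn^mn * qn := by ring
      rw [hpow]; exact mul_dvd_mul hgq hpq
    have hgpg : g * p ∣ Nat.gcd mn (qn^(mn+1)) := Nat.dvd_gcd hgpm hgpq
    have hhm : Nat.gcd mn (qn^(mn+1)) ∣ mn := Nat.gcd_dvd_left _ _
    have hhpos : 1 ≤ Nat.gcd mn (qn^(mn+1)) := Nat.pos_of_ne_zero (by
      intro h0
      have := Nat.eq_zero_of_gcd_eq_zero_left h0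
      omega)
    have hhle : Nat.gcd mn (qn^(mn+1)) ≤ mn := Nat.le_of_dvd (by omega) hhm
    have hhq : Nat.gcd mn (qn^(mn+1)) ∣ qn^(Nat.gcd mn (qn^(mn+1))) :=
      dvd_pow_self_of_dvd_pow _ hhpos (Nat.gcd_dvd_right _ _)
    have hhqs : Nat.gcd mn (qn^(mn+1)) ∣ qn^mn := hhq.trans (pow_dvd_pow qn hhle)
    have hfin : g * p ∣ g := hgpg.trans (Nat.dvd_gcd hhm hhqs)
    have hgpos : 1 ≤ g := Nat.pos_of_ne_zero (by
      intro h0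
      have := Nat.eq_zero_of_gcd_eq_zero_left h0
      omega)
    have hle := Nat.le_of_dvd (by omega) hfin
    have hp2 := hp.two_le
    nlinarith
  have hudvd : u ∣ e 1 := by
    have hueq : u ∣ qn^k * e 1 := dvd_trans ⟨g, by rw [← hgu]; ring⟩ hNat1
    exact (hcop.pow_right k).dvd_of_dvd_mul_left hueq
  have hgcopu : Nat.Coprime g u := (Nat.Coprime.coprime_dvd_right hgq (hcop.pow_right mn)).symm
  have hmndvd : mn ∣ e 1 := by
    rw [← hgu]
    exact Nat.Coprime.mul_dvd_of_dvd_of_dvd hgcopu hg1 hudvd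
  have hdvdZ : (n - 1) ∣ c 1 := by
    have hZ : ((mn:ℤ)) ∣ ((e 1 : ℕ):ℤ) := Int.natCast_dvd_natCast.mpr hmndvd
    rwa [hmZ, heZ 1 (by omega)] at hZ
  obtain ⟨t, ht⟩ := hdvdZ
  have hc1le : c 1 ≤ n - 1 := (hbnd 1 (by omega)).2
  have ht1 : 1 ≤ t := by nlinarith
  have ht2 : t ≤ 1 := by nlinarith
  have : t = 1 := by omega
  rw [ht, this, mul_one]


open Real in

-- geometric-sum quadrature lemma
lemma quad_cos_zero {F : ℕ} (hF : 1 ≤ F) (a : ℤ) (ha : a ≠ 0) (haF : a.natAbs < F) :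
    ∑ r ∈ range F, Real.cos ((a:ℝ)*((2*(r:ℝ)+1)*π/F)) = 0 := by
  have hFR : (F:ℝ) ≠ 0 := by positivity
  set ζ : ℂ := Complex.exp (((2*(a:ℝ)*π/F) : ℝ) * Complex.I) with hζdef
  have hne : ζ ≠ 1 := by
    intro h
    obtain ⟨m, hm⟩ := Complex.exp_eq_one_iff.mp h
    have hI : ((2*(a:ℝ)*π/F : ℝ) : ℂ) = ((m * (2*π) : ℝ) : ℂ) := by
      apply mul_right_cancel₀ Complex.I_ne_zero
      rw [hm]; push_cast; ring
    have hreal : 2*(a:ℝ)*π/F = m * (2*π) := by exact_mod_cast hI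
    have haeq : (a:ℝ) = m * F := by
      field_simp at hreal
      nlinarith [Real.pi_pos, hreal]
    have haZ : a = m * F := by exact_mod_cast haeq
    have habs : a.natAbs = m.natAbs * F := by rw [haZ, Int.natAbs_mul]; simp
    have hA : a.natAbs ≠ 0 := Int.natAbs_ne_zero.mpr ha
    rcases Nat.eq_zero_or_pos m.natAbs with h0 | h1
    · rw [h0, zero_mul] at habs; omega
    · have hFle : F ≤ a.natAbs := by
        rw [habs]
        calc F = 1*F := (one_mul F).symm
          _ ≤ m.natAbs * F := Nat.mul_le_mul_right F h1
      omega
  have hpow : ζ^F = 1 := by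
    rw [← Complex.exp_nat_mul]
    have hFC : (F:ℂ) ≠ 0 := Nat.cast_ne_zero.mpr (by omega)
    have harg : (F:ℂ) * (((2*(a:ℝ)*π/F) : ℝ) * Complex.I) = (a:ℤ) * (2*π*Complex.I) := by
      push_cast
      field_simp
    rw [harg]
    exact Complex.exp_int_mul_two_pi_mul_I a
  have hgeom : ∑ r ∈ range F, ζ^r = 0 := by
    rw [geom_sum_eq hne, hpow]
    simp
  have hsplit : ∀ r : ℕ, Complex.exp ((((a:ℝ)*((2*(r:ℝ)+1)*π/F)) : ℝ) * Complex.I)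
      = Complex.exp (((a:ℝ)*π/F : ℝ) * Complex.I) * ζ^r := by
    intro r
    rw [hζdef, ← Complex.exp_nat_mul, ← Complex.exp_add]
    congr 1
    push_cast
    ring
  calc ∑ r ∈ range F, Real.cos ((a:ℝ)*((2*(r:ℝ)+1)*π/F))
      = ∑ r ∈ range F, (Complex.exp ((((a:ℝ)*((2*(r:ℝ)+1)*π/F)) : ℝ) * Complex.I)).re := by
        exact Finset.sum_congr rfl fun r _ => (Complex.exp_ofReal_mul_I_re _).symm
    _ = (∑ r ∈ range F, Complex.exp ((((a:ℝ)*((2*(r:ℝ)+1)*π/F)) : ℝ) * Complex.I)).re := by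
        rw [Complex.re_sum]
    _ = ((Complex.exp (((a:ℝ)*π/F : ℝ) * Complex.I)) * ∑ r ∈ range F, ζ^r).re := by
        rw [Finset.mul_sum]
        congr 1
        exact Finset.sum_congr rfl fun r _ => hsplit r
    _ = 0 := by rw [hgeom]; simp

open Real in
lemma carrypoly_root {n b : ℤ} {k : ℕ} {d c : ℕ → ℤ}
    (hp : IsPalintiple n b k d) (hc : IsCarries n b k d c)
    (hsym : IsSym k c) (hdvd : n + 1 ∣ b) :
    ∃ θ : ℝ, ∑ j ∈ range (k+1), (c j : ℂ) * Complex.exp ((θ:ℂ) * Complex.I)^j = 0 := by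
  obtain ⟨q, hq⟩ := hdvd
  obtain ⟨hn, hnb, hk, hd, hdk, hd0, heq⟩ := hp
  obtain ⟨hc0, hrec⟩ := hc
  have hp' : IsPalintiple n b k d := ⟨hn, hnb, hk, hd, hdk, hd0, heq⟩
  have hc' : IsCarries n b k d c := ⟨hc0, hrec⟩
  have htop : c (k+1) = 0 := carries_top_zero hp' hc'
  have hbnd : ∀ j ≤ k+1, 0 ≤ c j ∧ c j ≤ n - 1 := carries_bounds hp' hc'
  have hck : c k = 0 := by rw [hsym k le_rfl, Nat.sub_self, hc0]
  have hc1 : c 1 = n - 1 := c_one_eq hp' hc' hsym hq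
  have hc1pos : 0 < c 1 := by rw [hc1]; linarith
  set T : ℝ → ℝ := fun θ => ∑ j ∈ range (k+1), (c j : ℝ) * Real.cos ((2*(j:ℝ) - k) * (θ/2))
    with hT
  -- reduction: a zero of T gives the complex root
  suffices hsuff : ∃ θ : ℝ, T θ = 0 by
    obtain ⟨θ₀, hθ₀⟩ := hsuff
    refine ⟨θ₀, ?_⟩
    have hsin : ∑ j ∈ range (k+1), (c j : ℝ) * Real.sin ((2*(j:ℝ) - k) * (θ₀/2)) = 0 := by
      have hrefl := Finset.sum_range_reflect
        (fun j => (c j:ℝ) * Real.sin ((2*(j:ℝ) - k) * (θ₀/2))) (k+1)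
      have hpt : ∀ j ∈ range (k+1),
          (c (k+1-1-j):ℝ) * Real.sin ((2*((k+1-1-j : ℕ):ℝ) - k) * (θ₀/2))
          = -((c j:ℝ) * Real.sin ((2*(j:ℝ) - k) * (θ₀/2))) := by
        intro j hj
        have hjk : j ≤ k := Nat.lt_succ_iff.mp (Finset.mem_range.mp hj)
        have h1 : k+1-1-j = k-j := by omega
        have h2 : ((k-j : ℕ):ℝ) = (k:ℝ) - j := by
          rw [Nat.cast_sub hjk]
        have h3 : c (k-j) = c j := (hsym j hjk).symm
        rw [h1, h2, h3]
        have h4 : (2*((k:ℝ) - j) - k) * (θ₀/2) = -((2*(j:ℝ) - k) * (θ₀/2)) := by ring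
        rw [h4, Real.sin_neg]
        ring
      rw [Finset.sum_congr rfl hpt] at hrefl
      rw [Finset.sum_neg_distrib] at hrefl
      linarith
    -- the symmetric complex sum is zero
    have hS : ∑ j ∈ range (k+1),
        (c j : ℂ) * Complex.exp (Complex.ofReal ((2*(j:ℝ) - k) * (θ₀/2)) * Complex.I) = 0 := by
      apply Complex.ext
      · rw [Complex.re_sum]
        have : ∀ j ∈ range (k+1),
            ((c j : ℂ) * Complex.exp (Complex.ofReal ((2*(j:ℝ) - k) * (θ₀/2)) * Complex.I)).re
            = (c j:ℝ) * Real.cos ((2*(j:ℝ) - k) * (θ₀/2)) := by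
          intro j _
          rw [Complex.mul_re, Complex.exp_ofReal_mul_I_re, Complex.exp_ofReal_mul_I_im,
            Complex.intCast_re, Complex.intCast_im, zero_mul, sub_zero]
        rw [Finset.sum_congr rfl this]
        have hθ₀' := hθ₀
        rw [hT] at hθ₀'
        simpa using hθ₀'
      · rw [Complex.im_sum]
        have : ∀ j ∈ range (k+1),
            ((c j : ℂ) * Complex.exp (Complex.ofReal ((2*(j:ℝ) - k) * (θ₀/2)) * Complex.I)).im
            = (c j:ℝ) * Real.sin ((2*(j:ℝ) - k) * (θ₀/2)) := by
          intro j _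
          rw [Complex.mul_im, Complex.exp_ofReal_mul_I_re, Complex.exp_ofReal_mul_I_im,
            Complex.intCast_re, Complex.intCast_im, zero_mul, add_zero]
        rw [Finset.sum_congr rfl this]
        simpa using hsin
    have hfact : ∀ j ∈ range (k+1),
        (c j : ℂ) * Complex.exp ((θ₀:ℂ) * Complex.I)^j
        = Complex.exp (Complex.ofReal ((k:ℝ) * (θ₀/2)) * Complex.I)
          * ((c j : ℂ) * Complex.exp (Complex.ofReal ((2*(j:ℝ) - k) * (θ₀/2)) * Complex.I)) := by
      intro j _
      have h1 : Complex.exp (Complex.ofReal ((k:ℝ) * (θ₀/2)) * Complex.I)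
            * ((c j : ℂ) * Complex.exp (Complex.ofReal ((2*(j:ℝ) - k) * (θ₀/2)) * Complex.I))
          = (c j : ℂ) * Complex.exp (Complex.ofReal ((k:ℝ) * (θ₀/2)) * Complex.I
              + Complex.ofReal ((2*(j:ℝ) - k) * (θ₀/2)) * Complex.I) := by
        rw [Complex.exp_add]; ring
      rw [h1, ← Complex.exp_nat_mul]
      congr 1
      push_cast
      ring
    rw [Finset.sum_congr rfl hfact, ← Finset.mul_sum, hS, mul_zero]
  -- now find a zero of T
  have hTcont : Continuous T := by
    apply continuous_finset_sum
    intro j _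
    fun_prop
  rcases Nat.even_or_odd k with ⟨M, hM⟩ | ⟨M, hM⟩
  · -- k even, k = M + M
    have hM1 : 1 ≤ M := by omega
    rcases eq_or_lt_of_le hM1 with hM1' | hM2
    · -- M = 1, k = 2 : impossible
      exfalso
      have hk2 : k = 2 := by omega
      have h2 := hrec 1 (by omega)
      rw [show k-1 = 1 by omega] at h2
      have hc2 : c 2 = 0 := by
        have h5 := hsym 2 (by omega)
        rw [show k-2 = 0 by omega] at h5
        rw [h5, hc0]
      rw [hc2] at h2
      have hd1 := hd 1 (by omega)
      nlinarith [hd1.1, hd1.2]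
    · -- M ≥ 2
      set F := M - 1 with hF
      have hFM : M = F + 1 := by omega
      have hF1 : 1 ≤ F := by omega
      have hFR : (0:ℝ) < F := by exact_mod_cast hF1
      -- quadrature identity
      have hquad : ∑ r ∈ range F, T ((2*(r:ℝ)+1)*π/F)
          = (F:ℝ) * ((c M : ℝ) - 2*((c 1 : ℝ))) := by
        have step1 : ∑ r ∈ range F, T ((2*(r:ℝ)+1)*π/F)
            = ∑ j ∈ range (k+1), ((c j:ℝ)
              * ∑ r ∈ range F, Real.cos (((j:ℝ) - M)*((2*(r:ℝ)+1)*π/F))) := by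
          rw [Finset.sum_comm]
          apply Finset.sum_congr rfl
          intro j _
          rw [Finset.mul_sum]
          apply Finset.sum_congr rfl
          intro r _
          congr 1
          have harg : (2*(j:ℝ) - k) * (((2*(r:ℝ)+1)*π/F)/2)
              = ((j:ℝ) - M)*((2*(r:ℝ)+1)*π/F) := by
            have : (k:ℝ) = 2*(M:ℝ) := by push_cast [hM]; ring
            rw [this]; ring
          rw [harg]
        rw [step1]
        have step2 : ∀ j ∈ range (k+1), (c j:ℝ)
              * ∑ r ∈ range F, Real.cos (((j:ℝ) - M)*((2*(r:ℝ)+1)*π/F))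
            = (if j = M then (c j:ℝ)*F else 0) + (if j = 1 then -((c j:ℝ)*F) else 0)
              + (if j = k-1 then -((c j:ℝ)*F) else 0) := by
          intro j hj
          have hjk : j ≤ k := Nat.lt_succ_iff.mp (Finset.mem_range.mp hj)
          by_cases hjM : j = M
          · subst hjM
            have : ∀ r ∈ range F, Real.cos (((j:ℝ) - j)*((2*(r:ℝ)+1)*π/F)) = 1 := by
              intro r _
              rw [sub_self, zero_mul, Real.cos_zero]
            rw [Finset.sum_congr rfl this]
            have hne1 : j ≠ 1 := by omega
            have hnek : j ≠ k - 1 := by omega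
            simp [hne1, hnek, Finset.sum_const, Finset.card_range]
          · by_cases hj1 : j = 1
            · subst hj1
              have : ∀ r ∈ range F, Real.cos ((((1:ℕ):ℝ) - M)*((2*(r:ℝ)+1)*π/F)) = -1 := by
                intro r _
                have h1 : (((1:ℕ):ℝ) - M) = -(F:ℝ) := by push_cast [hFM]; ring
                have h2 : (-(F:ℝ))*((2*(r:ℝ)+1)*π/F) = -(π + (r:ℤ)*(2*π)) := by
                  field_simp
                  push_cast
                  ring
                rw [h1, h2, Real.cos_neg, Real.cos_add_int_mul_two_pi, Real.cos_pi]
              rw [Finset.sum_congr rfl this]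
              have hneM : (1:ℕ) ≠ M := by omega
              have hnek : (1:ℕ) ≠ k - 1 := by omega
              simp [hneM, hnek, Finset.sum_const, Finset.card_range]
              try ring
            · by_cases hjk1 : j = k - 1
              · subst hjk1
                have : ∀ r ∈ range F, Real.cos ((((k-1 : ℕ):ℝ) - M)*((2*(r:ℝ)+1)*π/F)) = -1 := by
                  intro r _
                  have h1 : (((k-1:ℕ)):ℝ) - (M:ℝ) = (F:ℝ) := by
                    rw [show k-1 = 2*F+1 by omega]
                    push_cast [hFM]
                    ring
                  have h2 : ((F:ℝ))*((2*(r:ℝ)+1)*π/F) = π + (r:ℤ)*(2*π) := by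
                    field_simp
                    push_cast
                    ring
                  rw [h1, h2, Real.cos_add_int_mul_two_pi, Real.cos_pi]
                rw [Finset.sum_congr rfl this]
                have hneM : k - 1 ≠ M := by omega
                have hne1 : k - 1 ≠ 1 := by omega
                simp [hneM, hne1, Finset.sum_const, Finset.card_range]
                try ring
              · by_cases hj0 : j = 0
                · have hcj : ((c j : ℤ):ℝ) = 0 := by rw [hj0, hc0]; simp
                  rw [hcj, zero_mul, if_neg hjM, if_neg hj1, if_neg hjk1]
                  simp
                · by_cases hjk' : j = k
                  · have hcj : ((c j : ℤ):ℝ) = 0 := by rw [hjk', hck]; simp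
                    rw [hcj, zero_mul, if_neg hjM, if_neg hj1, if_neg hjk1]
                    simp
                  · -- generic zero case
                    have ha : ((j:ℤ) - M) ≠ 0 := by omega
                    have haF : ((j:ℤ) - M).natAbs < F := by omega
                    have hcos : ∑ r ∈ range F,
                        Real.cos (((j:ℝ) - M)*((2*(r:ℝ)+1)*π/F)) = 0 := by
                      have hcast : ∀ r : ℕ, ((j:ℝ) - M)*((2*(r:ℝ)+1)*π/F)
                          = ((((j:ℤ) - M) : ℤ):ℝ)*((2*(r:ℝ)+1)*π/F) := by
                        intro r; push_cast; ring
                      rw [Finset.sum_congr rfl (fun r _ => by rw [hcast r])]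
                      exact quad_cos_zero hF1 _ ha haF
                    rw [hcos, mul_zero]
                    simp [hjM, hj1, hjk1]
        rw [Finset.sum_congr rfl step2]
        rw [Finset.sum_add_distrib, Finset.sum_add_distrib]
        rw [Finset.sum_ite_eq' (range (k+1)) M (fun j => (c j:ℝ)*F)]
        have e2 : ∑ j ∈ range (k+1), (if j = 1 then -((c j:ℝ)*F) else 0)
            = -((c 1:ℝ)*F) := by
          rw [Finset.sum_ite_eq' (range (k+1)) 1 (fun j => -((c j:ℝ)*F))]
          simp [Finset.mem_range]
          omega
        have e3 : ∑ j ∈ range (k+1), (if j = k-1 then -((c j:ℝ)*F) else 0)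
            = -((c (k-1):ℝ)*F) := by
          rw [Finset.sum_ite_eq' (range (k+1)) (k-1) (fun j => -((c j:ℝ)*F))]
          simp [Finset.mem_range]
        rw [e2, e3]
        have hMmem : M ∈ range (k+1) := by simp [Finset.mem_range]; omega
        rw [if_pos hMmem]
        have hck1 : ((c (k-1) : ℤ):ℝ) = ((c 1 : ℤ):ℝ) := by
          have h5 := hsym 1 (by omega)
          rw [h5]
        rw [hck1]
        ring
      -- negativity of the quadrature sum
      have hcM : c M ≤ n - 1 := (hbnd M (by omega)).2
      have hneg : ∑ r ∈ range F, T ((2*(r:ℝ)+1)*π/F) < 0 := by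
        rw [hquad]
        have h1 : (c M : ℝ) - 2*(c 1:ℝ) ≤ -(n-1 : ℤ) := by
          have := hc1
          have hcMR : (c M : ℝ) ≤ ((n-1 : ℤ):ℝ) := by exact_mod_cast hcM
          have hc1R : ((c 1 : ℤ):ℝ) = ((n-1 : ℤ):ℝ) := by exact_mod_cast hc1
          rw [hc1R]
          push_cast
          push_cast at hcMR
          linarith
        have h2 : (0:ℝ) < ((n-1:ℤ):ℝ) := by
          exact_mod_cast (by linarith : (0:ℤ) < n - 1)
        nlinarith
      obtain ⟨r, hrmem, hrneg⟩ : ∃ r ∈ range F, T ((2*(r:ℝ)+1)*π/F) < 0 := by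
        by_contra hcon
        push_neg at hcon
        exact absurd (Finset.sum_nonneg hcon) (not_le.mpr hneg)
      set θr := (2*(r:ℝ)+1)*π/F with hθr
      have hθrpos : 0 ≤ θr := by
        rw [hθr]
        positivity
      have hT0 : 0 < T 0 := by
        have hT0eq : T 0 = ∑ j ∈ range (k+1), (c j:ℝ) := by
          apply Finset.sum_congr rfl
          intro j _
          norm_num
        rw [hT0eq]
        have hle : (c 1:ℝ) ≤ ∑ j ∈ range (k+1), (c j:ℝ) := by
          apply Finset.single_le_sum (f := fun j => ((c j : ℤ):ℝ))
          · intro j hj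
            have hjr : j < k + 1 := Finset.mem_range.mp hj
            have := (hbnd j (by omega)).1
            exact_mod_cast this
          · simp [Finset.mem_range]; omega
        have : (0:ℝ) < (c 1:ℝ) := by exact_mod_cast hc1pos
        linarith
      have hmem : (0:ℝ) ∈ Set.Icc (T θr) (T 0) := ⟨hrneg.le, hT0.le⟩
      obtain ⟨θ₀, _, hθ₀⟩ := intermediate_value_Icc' hθrpos hTcont.continuousOn hmem
      exact ⟨θ₀, hθ₀⟩
  · -- k odd : θ = π works termwise
    refine ⟨π, ?_⟩
    apply Finset.sum_eq_zero
    intro j hj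
    have hcosz : Real.cos ((2*(j:ℝ) - k) * (π/2)) = 0 := by
      have h1 : (2*(j:ℝ) - k) * (π/2) = ((j:ℤ) - M - 1 : ℤ)*π + π/2 := by
        push_cast [hM]
        ring
      rw [h1, Real.cos_add_pi_div_two, Real.sin_int_mul_pi, neg_zero]
    rw [hcosz, mul_zero]

lemma digitpoly_root {n b : ℤ} {k : ℕ} {d c : ℕ → ℤ}
    (hp : IsPalintiple n b k d) (hc : IsCarries n b k d c)
    (hsym : IsSym k c) (hdvd : n + 1 ∣ b) :
    ∃ θ : ℝ, ∑ j ∈ range (k+1), (d j : ℂ) * Complex.exp ((θ:ℂ) * Complex.I)^j = 0 := by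
  obtain ⟨θ, hθ⟩ := carrypoly_root hp hc hsym hdvd
  refine ⟨θ, ?_⟩
  set z : ℂ := Complex.exp ((θ:ℂ) * Complex.I) with hz
  obtain ⟨hn, hnb, hk, hd, hdk, hd0, heq⟩ := hp
  obtain ⟨hc0, hrec⟩ := hc
  have hp' : IsPalintiple n b k d := ⟨hn, hnb, hk, hd, hdk, hd0, heq⟩
  have hc' : IsCarries n b k d c := ⟨hc0, hrec⟩
  have htop : c (k+1) = 0 := carries_top_zero hp' hc'
  have hck : c k = 0 := by rw [hsym k le_rfl, Nat.sub_self, hc0]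
  have hL3 : ∀ j, j ≤ k → ((1:ℂ) - (n:ℂ)^2) * (d j : ℂ)
      = (c j:ℂ) - (b:ℂ)*(c (j+1):ℂ) + (n:ℂ)*(c (k-j):ℂ) - (n:ℂ)*(b:ℂ)*(c (k-j+1):ℂ) := by
    intro j hj
    have e1 := hrec j hj
    have e2 := hrec (k-j) (Nat.sub_le _ _)
    rw [Nat.sub_sub_self hj] at e2
    have hZ : (1 - n^2) * d j = c j - b * c (j+1) + n * c (k-j) - n*b*c (k-j+1) := by
      linear_combination (-1 : ℤ) * e1 - n * e2
    exact_mod_cast hZ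
  set C : ℂ := ∑ j ∈ range (k+1), (c j:ℂ) * z^j with hC
  set D : ℂ := ∑ j ∈ range (k+1), (d j:ℂ) * z^j with hD
  have S1 : ∑ j ∈ range (k+1), (c j:ℂ)*z^(j+1) = z * C := by
    rw [hC, Finset.mul_sum]
    exact Finset.sum_congr rfl fun j _ => by rw [pow_succ]; ring
  have S2 : ∑ j ∈ range (k+1), (c (j+1):ℂ)*z^(j+1) = C := by
    have e3 : ∑ j ∈ range (k+2), (c j:ℂ)*z^j
        = (∑ j ∈ range (k+1), (c (j+1):ℂ)*z^(j+1)) + (c 0:ℂ)*z^0 :=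
      Finset.sum_range_succ' (fun j => (c j:ℂ)*z^j) (k+1)
    have e4 : ∑ j ∈ range (k+2), (c j:ℂ)*z^j = C + (c (k+1):ℂ)*z^(k+1) :=
      Finset.sum_range_succ (fun j => (c j:ℂ)*z^j) (k+1)
    rw [e4, htop] at e3
    rw [hc0] at e3
    push_cast at e3
    linear_combination -e3
  have S3 : ∑ j ∈ range (k+1), (c (k-j):ℂ)*z^(j+1) = z * C := by
    have hpt : ∀ j ∈ range (k+1), (c (k-j):ℂ)*z^(j+1) = (c j:ℂ)*z^(j+1) := by
      intro j hj
      have hjk : j ≤ k := Nat.lt_succ_iff.mp (Finset.mem_range.mp hj)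
      rw [← hsym j hjk]
    rw [Finset.sum_congr rfl hpt, S1]
  have S4 : ∑ j ∈ range (k+1), (c (k-j+1):ℂ)*z^(j+1) = z^2 * C := by
    have e5 : ∑ j ∈ range (k+1), (c (k-j+1):ℂ)*z^(j+1)
        = (∑ j ∈ range k, (c (k-(j+1)+1):ℂ)*z^(j+1+1)) + (c (k-0+1):ℂ)*z^(0+1) :=
      Finset.sum_range_succ' (fun j => (c (k-j+1):ℂ)*z^(j+1)) k
    rw [e5]
    rw [Nat.sub_zero, htop]
    have hpt : ∀ j ∈ range k, (c (k-(j+1)+1):ℂ)*z^(j+1+1) = z^2 * ((c j:ℂ)*z^j) := by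
      intro j hj
      have hjk : j < k := Finset.mem_range.mp hj
      have h1 : k-(j+1)+1 = k-j := by omega
      rw [h1, ← hsym j (by omega)]
      ring
    rw [Finset.sum_congr rfl hpt, ← Finset.mul_sum]
    have e6 : ∑ j ∈ range (k+1), (c j:ℂ)*z^j = (∑ j ∈ range k, (c j:ℂ)*z^j) + (c k:ℂ)*z^k :=
      Finset.sum_range_succ (fun j => (c j:ℂ)*z^j) k
    rw [hC, e6, hck]
    push_cast
    ring
  have hiden : ((1:ℂ) - (n:ℂ)^2) * z * D = C * ((1 + (n:ℂ))*z - (b:ℂ) - (n:ℂ)*(b:ℂ)*z^2) := by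
    have lhs1 : ((1:ℂ) - (n:ℂ)^2) * z * D
        = ∑ j ∈ range (k+1), (((1:ℂ)-(n:ℂ)^2) * (d j:ℂ)) * z^(j+1) := by
      rw [hD, Finset.mul_sum]
      exact Finset.sum_congr rfl fun j _ => by rw [pow_succ]; ring
    rw [lhs1]
    have lhs2 : ∀ j ∈ range (k+1), (((1:ℂ)-(n:ℂ)^2) * (d j:ℂ)) * z^(j+1)
        = (c j:ℂ)*z^(j+1) - (b:ℂ)*((c (j+1):ℂ)*z^(j+1)) + (n:ℂ)*((c (k-j):ℂ)*z^(j+1))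
          - (n:ℂ)*(b:ℂ)*((c (k-j+1):ℂ)*z^(j+1)) := by
      intro j hj
      rw [hL3 j (Nat.lt_succ_iff.mp (Finset.mem_range.mp hj))]
      ring
    rw [Finset.sum_congr rfl lhs2]
    rw [Finset.sum_sub_distrib, Finset.sum_add_distrib, Finset.sum_sub_distrib,
      ← Finset.mul_sum, ← Finset.mul_sum, ← Finset.mul_sum, S1, S2, S3, S4]
    ring
  have hCz : C = 0 := hθ
  rw [hCz, zero_mul] at hiden
  have hzne : z ≠ 0 := Complex.exp_ne_zero _
  have hnne : ((1:ℂ) - (n:ℂ)^2) ≠ 0 := by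
    have : ((1 - n^2 : ℤ):ℂ) ≠ 0 := by
      rw [Int.cast_ne_zero]
      nlinarith
    push_cast at this
    convert this using 1
  rcases mul_eq_zero.mp hiden with h | h
  · rcases mul_eq_zero.mp h with h' | h'
    · exact absurd h' hnne
    · exact absurd h' hzne
  · exact h


/-- **Corollary.** Palinomials induced by Hoey and ρ-Hoey palintiples have at least one
root on the unit circle. -/
theorem hoey_palinomial_root_on_unit_circle (n b : ℤ) (k : ℕ) (d c : ℕ → ℤ)
    (hp : IsPalintiple n b k d) (hc : IsCarries n b k d c)
    (hsym : IsSym k c) (hdvd : n + 1 ∣ b)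
    (nh bh : ℤ) (dh ch : ℕ → ℤ)
    (hph : IsPalintiple nh bh (k + 1) dh) (hch : IsCarries nh bh (k + 1) dh ch)
    (hder :
      (ch 0 = 0 ∧ ∀ j, 1 ≤ j → j ≤ k + 1 → ch j = d (j - 1)) ∨
      (ch 0 = 0 ∧ ∀ j, 1 ≤ j → j ≤ k + 1 → ch j = d (k + 1 - j))) :
    ∃ z : ℂ, ‖z‖ = 1 ∧
      ∑ j ∈ range (k + 2), ((dh j : ℂ) - (nh : ℂ) * (dh (k + 1 - j) : ℂ)) * z ^ j = 0 := by
  obtain ⟨θ, hθ⟩ := digitpoly_root hp hc hsym hdvd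
  have htop2 : ch (k+2) = 0 := by
    have := carries_top_zero hph hch
    rwa [show (k+1)+1 = k+2 by omega] at this
  obtain ⟨hch0, hrech⟩ := hch
  have hco : ∀ j, j ≤ k+1 → (dh j : ℂ) - (nh:ℂ) * (dh (k+1-j) : ℂ)
      = (ch j:ℂ) - (bh:ℂ) * (ch (j+1):ℂ) := by
    intro j hj
    have hZ : dh j - nh * dh (k+1-j) = ch j - bh * ch (j+1) := by
      linarith [hrech j hj]
    exact_mod_cast hZ
  -- general factorization
  have hfac : ∀ w : ℂ, ∑ j ∈ range (k + 2), ((dh j : ℂ) - (nh : ℂ) * (dh (k + 1 - j) : ℂ)) * w ^ j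
      = (w - (bh:ℂ)) * ∑ j ∈ range (k+1), (ch (j+1):ℂ) * w^j := by
    intro w
    have hco' : ∀ j ∈ range (k+2), ((dh j : ℂ) - (nh : ℂ) * (dh (k + 1 - j) : ℂ)) * w ^ j
        = (ch j:ℂ) * w^j - (bh:ℂ) * ((ch (j+1):ℂ) * w^j) := by
      intro j hj
      rw [hco j (Nat.lt_succ_iff.mp (Finset.mem_range.mp hj))]
      ring
    rw [Finset.sum_congr rfl hco', Finset.sum_sub_distrib, ← Finset.mul_sum]
    have eA : ∑ j ∈ range (k+2), (ch (j+1):ℂ) * w^j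
        = (∑ j ∈ range (k+1), (ch (j+1):ℂ) * w^j) + (ch (k+2):ℂ) * w^(k+1) := by
      have := Finset.sum_range_succ (fun j => (ch (j+1):ℂ) * w^j) (k+1)
      rwa [show (k+1)+1 = k+2 by omega] at this
    have eB : ∑ j ∈ range (k+2), (ch j:ℂ) * w^j
        = (∑ j ∈ range (k+1), (ch (j+1):ℂ) * w^(j+1)) + (ch 0:ℂ) * w^0 :=
      Finset.sum_range_succ' (fun j => (ch j:ℂ) * w^j) (k+1)
    have eC : ∑ j ∈ range (k+1), (ch (j+1):ℂ) * w^(j+1)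
        = w * ∑ j ∈ range (k+1), (ch (j+1):ℂ) * w^j := by
      rw [Finset.mul_sum]
      exact Finset.sum_congr rfl fun j _ => by rw [pow_succ]; ring
    rw [eA, eB, eC, htop2, hch0]
    push_cast
    ring
  rcases hder with ⟨h0, hder⟩ | ⟨h0, hder⟩
  · -- Hoey case
    refine ⟨Complex.exp ((θ:ℂ) * Complex.I), Complex.norm_exp_ofReal_mul_I θ, ?_⟩
    rw [hfac]
    have hsub : ∑ j ∈ range (k+1), (ch (j+1):ℂ) * Complex.exp ((θ:ℂ) * Complex.I)^j
        = ∑ j ∈ range (k+1), (d j:ℂ) * Complex.exp ((θ:ℂ) * Complex.I)^j := by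
      apply Finset.sum_congr rfl
      intro j hj
      have hjk : j < k+1 := Finset.mem_range.mp hj
      rw [hder (j+1) (by omega) (by omega), Nat.add_sub_cancel]
    rw [hsub, hθ, mul_zero]
  · -- ρ-Hoey case
    refine ⟨Complex.exp (((-θ : ℝ):ℂ) * Complex.I), Complex.norm_exp_ofReal_mul_I (-θ), ?_⟩
    rw [hfac]
    set w : ℂ := Complex.exp (((-θ : ℝ):ℂ) * Complex.I) with hw
    set zθ : ℂ := Complex.exp ((θ:ℂ) * Complex.I) with hzθ
    have hwz : w * zθ = 1 := by
      rw [hw, hzθ, ← Complex.exp_add]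
      rw [show (((-θ : ℝ):ℂ) * Complex.I + (θ:ℂ) * Complex.I) = 0 by push_cast; ring]
      exact Complex.exp_zero
    have hsub : ∑ j ∈ range (k+1), (ch (j+1):ℂ) * w^j
        = ∑ j ∈ range (k+1), (d (k-j):ℂ) * w^j := by
      apply Finset.sum_congr rfl
      intro j hj
      have hjk : j < k+1 := Finset.mem_range.mp hj
      rw [hder (j+1) (by omega) (by omega), show k+1-(j+1) = k-j by omega]
    have hrefl : ∑ j ∈ range (k+1), (d (k-j):ℂ) * w^j
        = ∑ j ∈ range (k+1), (d j:ℂ) * w^(k-j) := by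
      have := Finset.sum_range_reflect (fun j => (d j:ℂ) * w^(k-j)) (k+1)
      have hpt : ∀ j ∈ range (k+1), (d (k+1-1-j):ℂ) * w^(k-(k+1-1-j)) = (d (k-j):ℂ) * w^j := by
        intro j hj
        have hjk : j ≤ k := Nat.lt_succ_iff.mp (Finset.mem_range.mp hj)
        rw [show k+1-1-j = k-j by omega, Nat.sub_sub_self hjk]
      rw [← Finset.sum_congr rfl hpt, this]
    have hpow : ∀ j ∈ range (k+1), (d j:ℂ) * w^(k-j) = w^k * ((d j:ℂ) * zθ^j) := by
      intro j hj
      have hjk : j ≤ k := Nat.lt_succ_iff.mp (Finset.mem_range.mp hj)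
      have h1 : w^(k-j) * (w*zθ)^j = w^k * zθ^j := by
        rw [mul_pow, ← mul_assoc, ← pow_add, Nat.sub_add_cancel hjk]
      rw [hwz, one_pow, mul_one] at h1
      rw [h1]
      ring
    rw [hsub, hrefl, Finset.sum_congr rfl hpow, ← Finset.mul_sum, hθ, mul_zero, mul_zero]
end
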